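/- arXiv:1004.2722 — 5 statements merged into one kernel-verified Lean document; each statement's English description precedes it below -/
import Mathlib

section
/- Every solution of the autonomous system with initial condition in the open rectangle (0,1) × (0, 2μ/σ) and different from the equilibrium (1/2, μ/σ) is defined for all t ∈ ℝ and is periodic: there exists τ > 0 such that (p(t + τ), q(t + τ)) = (p(t), q(t)) for all t ∈ ℝ. -/
set_option maxHeartbeats 1000000
open Set Metric Real
open scoped NNReal
namespace PeriodicOrbitAux

noncomputable def vf (μ σ : ℝ) (z : ℝ × ℝ) : ℝ × ℝ :=
  (μ * (z.1 - z.1 ^ 2) + σ * (z.1 ^ 2 - z.1) * z.2,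
   μ * (2 * z.1 - 1) * z.2 + σ / 2 * (1 - 2 * z.1) * z.2 ^ 2)


noncomputable def Ham (μ σ : ℝ) (z : ℝ × ℝ) : ℝ :=
  μ * (z.1 ^ 2 - z.1) * z.2 + σ / 2 * (z.1 - z.1 ^ 2) * z.2 ^ 2

def Omg (μ σ : ℝ) : Set (ℝ × ℝ) := Ioo 0 1 ×ˢ Ioo 0 (2 * μ / σ)

def Rect (μ σ : ℝ) : Set (ℝ × ℝ) := Icc 0 1 ×ˢ Icc 0 (2 * μ / σ)

lemma Omg_subset_Rect (μ σ : ℝ) : Omg μ σ ⊆ Rect μ σ :=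
  Set.prod_mono Ioo_subset_Icc_self Ioo_subset_Icc_self

lemma isOpen_Omg (μ σ : ℝ) : IsOpen (Omg μ σ) := isOpen_Ioo.prod isOpen_Ioo

lemma isClosed_Rect (μ σ : ℝ) : IsClosed (Rect μ σ) := isClosed_Icc.prod isClosed_Icc

noncomputable def clamp (a b x : ℝ) : ℝ := max (min x b) a

lemma clamp_lipschitz (a b : ℝ) : LipschitzWith 1 (clamp a b) :=
  (LipschitzWith.id.min_const b).max_const a

lemma clamp_eq_self {a b x : ℝ} (h1 : a ≤ x) (h2 : x ≤ b) : clamp a b x = x := by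
  unfold clamp; rw [min_eq_left h2, max_eq_left h1]

lemma clamp_mem {a b : ℝ} (hab : a ≤ b) (x : ℝ) : clamp a b x ∈ Icc a b :=
  ⟨le_max_right _ _, max_le (min_le_right _ _) hab⟩

noncomputable def proj2 (μ σ : ℝ) (z : ℝ × ℝ) : ℝ × ℝ :=
  (clamp (-1) 2 z.1, clamp (-(2 * μ / σ)) (2 * (2 * μ / σ)) z.2)

noncomputable def vft (μ σ : ℝ) (z : ℝ × ℝ) : ℝ × ℝ := vf μ σ (proj2 μ σ z)

lemma vf_contDiff (μ σ : ℝ) : ContDiff ℝ 1 (vf μ σ) := by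
  unfold vf; apply ContDiff.prodMk <;> fun_prop

lemma vf_lipschitzOnWith (μ σ M : ℝ) :
    ∃ L : ℝ≥0, LipschitzOnWith L (vf μ σ) (closedBall (0 : ℝ × ℝ) M) := by
  have hc : ContDiff ℝ 1 (vf μ σ) := vf_contDiff μ σ
  have hcf : Continuous fun z => fderiv ℝ (vf μ σ) z := hc.continuous_fderiv one_ne_zero
  obtain ⟨C, hC⟩ := (isCompact_closedBall (0 : ℝ × ℝ) M).exists_bound_of_continuousOn
    (hcf.continuousOn (s := closedBall 0 M))
  refine ⟨C.toNNReal, Convex.lipschitzOnWith_of_nnnorm_hasFDerivWithin_le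
    (fun x _ => ((hc.differentiable one_ne_zero).differentiableAt.hasFDerivAt).hasFDerivWithinAt)
    (fun x hx => ?_) (convex_closedBall _ _)⟩
  rw [← norm_toNNReal]
  exact Real.toNNReal_mono (hC x hx)

section Main
variable {μ σ : ℝ} (hμ : 0 < μ) (hσ : 0 < σ)

/-- The big ball radius. -/
noncomputable def bigM (μ σ : ℝ) : ℝ := 2 + 2 * (2 * μ / σ)

include hμ hσ in
lemma qs_pos : 0 < 2 * μ / σ := by positivity

include hμ hσ in
lemma proj2_mem_ball (z : ℝ × ℝ) : proj2 μ σ z ∈ closedBall (0 : ℝ × ℝ) (bigM μ σ) := by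
  have hqs : 0 < 2 * μ / σ := qs_pos hμ hσ
  rw [mem_closedBall_zero_iff, Prod.norm_def]
  have h1 := clamp_mem (by norm_num : (-1:ℝ) ≤ 2) z.1
  have h2 := clamp_mem (by linarith : -(2*μ/σ) ≤ 2*(2*μ/σ)) z.2
  unfold proj2 bigM
  apply max_le
  · rw [Real.norm_eq_abs, abs_le]; constructor <;> [linarith [h1.1]; linarith [h1.2]]
  · rw [Real.norm_eq_abs, abs_le]; constructor <;> [linarith [h2.1]; linarith [h2.2]]

include hμ hσ in
lemma proj2_eq_self {z : ℝ × ℝ} (h1 : z.1 ∈ Icc (0:ℝ) 1) (h2 : z.2 ∈ Icc 0 (2*μ/σ)) :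
    proj2 μ σ z = z := by
  have hqs : 0 < 2 * μ / σ := qs_pos hμ hσ
  unfold proj2
  rw [clamp_eq_self (by linarith [h1.1]) (by linarith [h1.2]),
      clamp_eq_self (by linarith [h2.1]) (by linarith [h2.2])]

include hμ hσ in
lemma vft_eq_vf {z : ℝ × ℝ} (h1 : z.1 ∈ Icc (0:ℝ) 1) (h2 : z.2 ∈ Icc 0 (2*μ/σ)) :
    vft μ σ z = vf μ σ z := by
  unfold vft; rw [proj2_eq_self hμ hσ h1 h2]

include hμ hσ in
lemma vft_lipschitz : ∃ L : ℝ≥0, LipschitzWith L (vft μ σ) := by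
  obtain ⟨L, hL⟩ := vf_lipschitzOnWith μ σ (bigM μ σ)
  have h1 : LipschitzWith 1 (proj2 μ σ) := by
    have h1 := (clamp_lipschitz (-1) 2).comp (LipschitzWith.prod_fst (α := ℝ) (β := ℝ))
    have h2 := (clamp_lipschitz (-(2 * μ / σ)) (2 * (2 * μ / σ))).comp
      (LipschitzWith.prod_snd (α := ℝ) (β := ℝ))
    have h := h1.prodMk h2
    unfold proj2; convert h using 2 <;> norm_num
  refine ⟨L * 1, ?_⟩
  have : LipschitzOnWith (L * 1) (vf μ σ ∘ proj2 μ σ) univ :=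
    hL.comp (h1.lipschitzOnWith (s := univ)) (fun z _ => proj2_mem_ball hμ hσ z)
  rw [lipschitzOnWith_univ] at this
  exact this

include hμ hσ in
lemma vft_bound : ∃ C : ℝ, 0 ≤ C ∧ ∀ z, ‖vft μ σ z‖ ≤ C := by
  obtain ⟨C, hC⟩ := (isCompact_closedBall (0 : ℝ × ℝ) (bigM μ σ)).exists_bound_of_continuousOn
    ((vf_contDiff μ σ).continuous.continuousOn)
  refine ⟨max C 0, le_max_right _ _, fun z => ?_⟩
  exact le_trans (hC _ (proj2_mem_ball hμ hσ z)) (le_max_left _ _)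

include hμ hσ in
/-- Global-in-time existence for the clamped field on any interval. -/
lemma exists_sol (T : ℝ) (hT : 0 < T) (x₀ : ℝ × ℝ) :
    ∃ α : ℝ → ℝ × ℝ, α 0 = x₀ ∧ ∀ t ∈ Ioo (-T) T, HasDerivAt α (vft μ σ (α t)) t := by
  obtain ⟨L, hL⟩ := vft_lipschitz hμ hσ
  obtain ⟨C, hC0, hC⟩ := vft_bound hμ hσ
  have hpl : IsPicardLindelof (fun _ z => vft μ σ z) (tmin := -T) (tmax := T)
      ⟨0, by constructor <;> linarith⟩ x₀ ((⟨C, hC0⟩ + 1) * ⟨T, hT.le⟩) 0 ⟨C, hC0⟩ L :=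
    { lipschitzOnWith := fun t _ => hL.lipschitzOnWith
      continuousOn := fun x _ => continuousOn_const
      norm_le := fun t _ x _ => hC x
      mul_max_le := by
        simp only [sub_zero, tsub_zero, zero_sub, neg_neg, max_self, NNReal.coe_mul,
          NNReal.coe_add, NNReal.coe_one, NNReal.coe_mk, NNReal.coe_zero]
        change C * T ≤ (C + 1) * T
        nlinarith }
  obtain ⟨α, hα0, hα⟩ := hpl.exists_eq_forall_mem_Icc_hasDerivWithinAt₀
  exact ⟨α, hα0, fun t ht =>
    (hα t (Ioo_subset_Icc_self ht)).hasDerivAt (Icc_mem_nhds ht.1 ht.2)⟩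

end Main
end PeriodicOrbitAux

namespace PeriodicOrbitAux
open Set Metric Real
open scoped NNReal

section Main2
variable {μ σ : ℝ} (hμ : 0 < μ) (hσ : 0 < σ)

lemma hasDerivAt_comp_fst {Z : ℝ → ℝ × ℝ} {w : ℝ × ℝ} {t : ℝ} (h : HasDerivAt Z w t) :
    HasDerivAt (fun s => (Z s).1) w.1 t := by
  have := (ContinuousLinearMap.fst ℝ ℝ ℝ).hasFDerivAt.comp_hasDerivAt t h
  simpa [Function.comp_def] using this

lemma hasDerivAt_comp_snd {Z : ℝ → ℝ × ℝ} {w : ℝ × ℝ} {t : ℝ} (h : HasDerivAt Z w t) :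
    HasDerivAt (fun s => (Z s).2) w.2 t := by
  have := (ContinuousLinearMap.snd ℝ ℝ ℝ).hasFDerivAt.comp_hasDerivAt t h
  simpa [Function.comp_def] using this

/-- The Hamiltonian is conserved along (forward or backward) solutions. -/
lemma ham_deriv_zero {α : ℝ → ℝ × ℝ} {t : ℝ} (c : ℝ)
    (h : HasDerivAt α (c • vf μ σ (α t)) t) :
    HasDerivAt (fun s => Ham μ σ (α s)) 0 t := by
  have hx : HasDerivAt (fun s => (α s).1) (c * (vf μ σ (α t)).1) t := by
    simpa using hasDerivAt_comp_fst h
  have hy : HasDerivAt (fun s => (α s).2) (c * (vf μ σ (α t)).2) t := by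
    simpa using hasDerivAt_comp_snd h
  set x' := c * (vf μ σ (α t)).1
  set y' := c * (vf μ σ (α t)).2
  have hd : HasDerivAt (fun s => Ham μ σ (α s))
      ((μ * ((2 * (α t).1 ^ 1 * x') - x') * (α t).2 + μ * ((α t).1 ^ 2 - (α t).1) * y')
        + (σ / 2 * (x' - 2 * (α t).1 ^ 1 * x') * (α t).2 ^ 2
          + σ / 2 * ((α t).1 - (α t).1 ^ 2) * (2 * (α t).2 ^ 1 * y'))) t := by
    unfold Ham
    exact ((((hx.pow 2).sub hx).const_mul μ).mul hy).add
      (((hx.sub (hx.pow 2)).const_mul (σ / 2)).mul (hy.pow 2))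
  convert hd using 1
  simp only [x', y', vf, pow_one]
  ring

include hσ in
lemma mem_Omg_of_ham_ne {z : ℝ × ℝ} (hz : z ∈ Rect μ σ) (hH : Ham μ σ z ≠ 0) :
    z ∈ Omg μ σ := by
  obtain ⟨⟨h10, h11⟩, h20, h21⟩ := hz
  have hσ' : σ ≠ 0 := ne_of_gt hσ
  refine ⟨⟨lt_of_le_of_ne h10 ?_, lt_of_le_of_ne h11 ?_⟩,
          ⟨lt_of_le_of_ne h20 ?_, lt_of_le_of_ne h21 ?_⟩⟩
  · intro h; exact hH (by simp [Ham, ← h])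
  · intro h; apply hH; rw [Ham, h]; ring
  · intro h; exact hH (by simp [Ham, ← h])
  · intro h; apply hH; rw [Ham, h]; field_simp; ring

lemma continuous_ham (μ σ : ℝ) : Continuous (Ham μ σ) := by
  unfold Ham; fun_prop

/-- Constancy of the Hamiltonian on a closed interval. -/
lemma ham_const {w : ℝ → ℝ × ℝ → ℝ × ℝ} {α : ℝ → ℝ × ℝ} {c : ℝ}
    (hw : ∀ t, ∀ z ∈ Rect μ σ, w t z = vf μ σ z ∨ w t z = -vf μ σ z)
    (hα : ∀ t ∈ Icc 0 c, HasDerivAt α (w t (α t)) t)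
    (hmem : ∀ t ∈ Icc 0 c, α t ∈ Rect μ σ) :
    ∀ t ∈ Icc 0 c, Ham μ σ (α t) = Ham μ σ (α 0) := by
  apply constant_of_has_deriv_right_zero
  · intro t ht
    have : ContinuousAt (fun s => Ham μ σ (α s)) t :=
      (continuous_ham μ σ).continuousAt.comp (hα t ht).continuousAt
    exact this.continuousWithinAt
  · intro t ht
    have ht' : t ∈ Icc 0 c := Ico_subset_Icc_self ht
    have hder : HasDerivAt (fun s => Ham μ σ (α s)) 0 t := by
      rcases hw t (α t) (hmem t ht') with h | h
      · exact ham_deriv_zero (1 : ℝ) (by simpa [h] using hα t ht')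
      · exact ham_deriv_zero (-1 : ℝ) (by simpa [h] using hα t ht')
    exact hder.hasDerivWithinAt

include hσ in
/-- Forward invariance: a solution of `±vf` (via a field agreeing with it on `Rect`)
starting in `Omg` with negative energy remains in `Omg` with constant energy. -/
lemma invariant_fwd {w : ℝ → ℝ × ℝ → ℝ × ℝ} {α : ℝ → ℝ × ℝ} {s : ℝ}
    (hw : ∀ t, ∀ z ∈ Rect μ σ, w t z = vf μ σ z ∨ w t z = -vf μ σ z)
    (hα : ∀ t ∈ Icc 0 s, HasDerivAt α (w t (α t)) t)
    (h0 : α 0 ∈ Omg μ σ) (hH : Ham μ σ (α 0) < 0) :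
    ∀ t ∈ Icc 0 s, α t ∈ Omg μ σ ∧ Ham μ σ (α t) = Ham μ σ (α 0) := by
  by_cases hB : ∀ r ∈ Icc 0 s, α r ∈ Rect μ σ
  · intro t ht
    have hHt := ham_const hw hα hB t ht
    exact ⟨mem_Omg_of_ham_ne hσ (hB t ht) (by rw [hHt]; exact ne_of_lt hH), hHt⟩
  · exfalso
    push_neg at hB
    set B := {r ∈ Icc 0 s | α r ∉ Rect μ σ} with hBdef
    have hBne : B.Nonempty := by
      obtain ⟨r, hr1, hr2⟩ := hB; exact ⟨r, hr1, hr2⟩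
    have hBbdd : BddBelow B := ⟨0, fun r hr => hr.1.1⟩
    set c := sInf B with hcdef
    have hc0 : 0 ≤ c := le_csInf hBne fun r hr => hr.1.1
    have hcs : c ≤ s := by
      obtain ⟨r, hr⟩ := hBne
      exact le_trans (csInf_le hBbdd hr) hr.1.2
    have hcmem : c ∈ Icc 0 s := ⟨hc0, hcs⟩
    have hbefore : ∀ r, 0 ≤ r → r < c → α r ∈ Rect μ σ := by
      intro r hr0 hrc
      by_contra hnot
      exact absurd (csInf_le hBbdd ⟨⟨hr0, le_trans hrc.le hcs⟩, hnot⟩) (not_le.mpr hrc)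
    have hc_rect : α c ∈ Rect μ σ := by
      rcases eq_or_lt_of_le hc0 with h | h
      · rw [← h]; exact Omg_subset_Rect μ σ h0
      · have htd : Filter.Tendsto α (nhdsWithin c (Iio c)) (nhds (α c)) :=
          ((hα c hcmem).continuousAt).continuousWithinAt
        refine (isClosed_Rect μ σ).mem_of_tendsto htd ?_
        have hmem' : Ioo 0 c ∈ nhdsWithin c (Iio c) :=
          Filter.inter_mem (mem_nhdsWithin_of_mem_nhds (Ioi_mem_nhds h)) self_mem_nhdsWithin
        exact Filter.eventually_of_mem hmem' fun r hr => hbefore r hr.1.le hr.2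
    have hmemc : ∀ r ∈ Icc 0 c, α r ∈ Rect μ σ := by
      intro r hr
      rcases eq_or_lt_of_le hr.2 with h | h
      · rw [h]; exact hc_rect
      · exact hbefore r hr.1 h
    have hαc : ∀ t ∈ Icc 0 c, HasDerivAt α (w t (α t)) t :=
      fun t ht => hα t ⟨ht.1, le_trans ht.2 hcs⟩
    have hHc : Ham μ σ (α c) = Ham μ σ (α 0) :=
      ham_const hw hαc hmemc c ⟨hc0, le_refl c⟩
    have hcOmg : α c ∈ Omg μ σ :=
      mem_Omg_of_ham_ne hσ hc_rect (by rw [hHc]; exact ne_of_lt hH)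
    have hev : ∀ᶠ r in nhds c, α r ∈ Omg μ σ :=
      (hα c hcmem).continuousAt.eventually_mem ((isOpen_Omg μ σ).mem_nhds hcOmg)
    obtain ⟨δ, hδ, hball⟩ := Metric.eventually_nhds_iff_ball.mp hev
    have hlb : ∀ r ∈ B, c + δ ≤ r := by
      intro r hr
      have h1 : c ≤ r := csInf_le hBbdd hr
      by_contra hlt
      push_neg at hlt
      have : r ∈ ball c δ := by
        rw [mem_ball, Real.dist_eq, abs_lt]; constructor <;> linarith
      exact hr.2 (Omg_subset_Rect μ σ (hball r this))
    have : c + δ ≤ c := le_csInf hBne hlb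
    linarith

include hμ hσ in
/-- Two-sided invariance for solutions of the clamped field. -/
lemma invariant {α : ℝ → ℝ × ℝ} {T : ℝ}
    (hα : ∀ t ∈ Ioo (-T) T, HasDerivAt α (vft μ σ (α t)) t)
    (h0 : α 0 ∈ Omg μ σ) (hH : Ham μ σ (α 0) < 0) (hT : 0 < T) :
    ∀ t ∈ Ioo (-T) T, α t ∈ Omg μ σ ∧ Ham μ σ (α t) = Ham μ σ (α 0) := by
  have hw : ∀ (t : ℝ), ∀ z ∈ Rect μ σ, vft μ σ z = vf μ σ z ∨ vft μ σ z = -vf μ σ z :=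
    fun _ z hz => Or.inl (vft_eq_vf hμ hσ hz.1 hz.2)
  intro t ht
  rcases le_or_gt 0 t with h | h
  · exact invariant_fwd hσ (w := fun _ => vft μ σ) hw
      (fun r hr => hα r ⟨by linarith [hr.1], by linarith [hr.2, ht.2]⟩)
      h0 hH t ⟨h, le_refl t⟩
  · -- backward in time: use the reversed solution
    set β : ℝ → ℝ × ℝ := fun r => α (-r) with hβdef
    have hβ : ∀ r ∈ Icc 0 (-t), HasDerivAt β (-vft μ σ (β r)) r := by
      intro r hr
      have hmem : -r ∈ Ioo (-T) T := ⟨by linarith [hr.2, ht.1], by linarith [hr.1]⟩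
      have h1 : HasDerivAt α (vft μ σ (α (-r))) (-r) := hα _ hmem
      have h2 : HasDerivAt (fun s : ℝ => -s) (-1 : ℝ) r := (hasDerivAt_neg r)
      have := h1.scomp r h2
      simpa [hβdef, Function.comp_def] using this
    have hw' : ∀ (r : ℝ), ∀ z ∈ Rect μ σ, -vft μ σ z = vf μ σ z ∨ -vft μ σ z = -vf μ σ z :=
      fun _ z hz => Or.inr (by rw [vft_eq_vf hμ hσ hz.1 hz.2])
    have hβ0 : β 0 = α 0 := by simp [hβdef]
    have := invariant_fwd hσ (w := fun _ z => -vft μ σ z) hw' hβ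
      (by rw [hβ0]; exact h0) (by rw [hβ0]; exact hH) (-t) ⟨by linarith, le_refl _⟩
    rw [hβdef] at this
    simpa using this

include hμ hσ in
/-- A global solution of the clamped field through any initial point, staying in `Omg`
with constant energy if the initial point is in `Omg` with negative energy. -/
lemma global_sol {x₀ : ℝ × ℝ} (h0 : x₀ ∈ Omg μ σ) (hH : Ham μ σ x₀ < 0) :
    ∃ Z : ℝ → ℝ × ℝ, Z 0 = x₀ ∧ (∀ t : ℝ, HasDerivAt Z (vft μ σ (Z t)) t) ∧
      (∀ t : ℝ, Z t ∈ Omg μ σ ∧ Ham μ σ (Z t) = Ham μ σ x₀) := by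
  obtain ⟨L, hL⟩ := vft_lipschitz hμ hσ
  have hLon : ∀ r : ℝ, LipschitzOnWith L (fun z => vft μ σ z) univ :=
    fun _ => hL.lipschitzOnWith (s := univ)
  choose sol hsol0 hsolD using fun n : ℕ => exists_sol hμ hσ ((n : ℝ) + 1) (by positivity) x₀
  have agree : ∀ (m n : ℕ) (t : ℝ), |t| < (m : ℝ) + 1 → |t| < (n : ℝ) + 1 →
      sol m t = sol n t := by
    intro m n t hm hn
    set c : ℝ := min ((m : ℝ) + 1) ((n : ℝ) + 1) with hcdef
    have hc : 0 < c := lt_min (by positivity) (by positivity)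
    rw [abs_lt] at hm hn
    have ht : t ∈ Ioo (-c) c := by
      constructor
      · rw [neg_lt, hcdef, lt_min_iff]; constructor <;> [linarith [hm.1]; linarith [hn.1]]
      · rw [hcdef, lt_min_iff]; exact ⟨hm.2, hn.2⟩
    have hsub1 : Ioo (-c) c ⊆ Ioo (-((m : ℝ) + 1)) ((m : ℝ) + 1) := by
      apply Ioo_subset_Ioo
      · rw [neg_le_neg_iff]; exact min_le_left _ _
      · exact min_le_left _ _
    have hsub2 : Ioo (-c) c ⊆ Ioo (-((n : ℝ) + 1)) ((n : ℝ) + 1) := by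
      apply Ioo_subset_Ioo
      · rw [neg_le_neg_iff]; exact min_le_right _ _
      · exact min_le_right _ _
    exact ODE_solution_unique_of_mem_Ioo (s := fun _ => (univ : Set (ℝ × ℝ))) (fun r _ => hLon r)
      (t₀ := 0) ⟨by linarith, hc⟩
      (fun r hr => ⟨hsolD m r (hsub1 hr), trivial⟩)
      (fun r hr => ⟨hsolD n r (hsub2 hr), trivial⟩)
      ((hsol0 m).trans (hsol0 n).symm) ht
  set Z : ℝ → ℝ × ℝ := fun t => sol ⌊|t|⌋₊ t with hZdef
  have hZn : ∀ (n : ℕ) (t : ℝ), |t| < (n : ℝ) + 1 → Z t = sol n t := by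
    intro n t hn
    exact agree _ n t (Nat.lt_floor_add_one |t|) hn
  have hZ0 : Z 0 = x₀ := by
    have := hZn 0 0 (by norm_num)
    rw [this]; exact hsol0 0
  refine ⟨Z, hZ0, ?_, ?_⟩
  · intro t
    set n : ℕ := ⌊|t|⌋₊ + 1 with hndef
    have htn : |t| < (n : ℝ) := by
      rw [hndef]; push_cast; exact Nat.lt_floor_add_one |t|
    have hev : Z =ᶠ[nhds t] sol n := by
      have hopen : IsOpen {s : ℝ | |s| < (n : ℝ) + 1} := by
        have : {s : ℝ | |s| < (n : ℝ) + 1} = Ioo (-((n : ℝ) + 1)) ((n : ℝ) + 1) := by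
          ext s; simp [abs_lt]
        rw [this]; exact isOpen_Ioo
      refine Filter.eventuallyEq_of_mem (hopen.mem_nhds ?_) ?_
      · simp only [mem_setOf_eq]; linarith
      · intro s hs; exact hZn n s hs
    have hd : HasDerivAt (sol n) (vft μ σ (sol n t)) t :=
      hsolD n t (by rw [mem_Ioo, ← abs_lt]; linarith)
    have : HasDerivAt Z (vft μ σ (sol n t)) t := hd.congr_of_eventuallyEq hev
    rwa [← hZn n t (by linarith)] at this
  · intro t
    set n : ℕ := ⌊|t|⌋₊ + 1 with hndef
    have htn : |t| < (n : ℝ) := by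
      rw [hndef]; push_cast; exact Nat.lt_floor_add_one |t|
    have h1 := invariant hμ hσ (T := (n : ℝ) + 1) (hsolD n)
      (by rw [hsol0 n]; exact h0) (by rw [hsol0 n]; exact hH) (by positivity)
      t (by rw [mem_Ioo, ← abs_lt]; linarith)
    rw [← hZn n t (by linarith), hsol0 n] at h1
    exact h1

/-! ### Algebraic facts about the orbit -/

include hμ hσ in
lemma ham_neg {z : ℝ × ℝ} (hz : z ∈ Omg μ σ) : Ham μ σ z < 0 := by
  obtain ⟨⟨h10, h11⟩, h20, h21⟩ := hz
  have hG : 0 < z.1 - z.1 ^ 2 := by nlinarith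
  have h21' : z.2 * σ < 2 * μ := (lt_div_iff₀ hσ).mp h21
  have hW : 0 < μ * z.2 - σ / 2 * z.2 ^ 2 := by
    nlinarith [mul_pos h20 (sub_pos.mpr h21')]
  have : Ham μ σ z = -((z.1 - z.1 ^ 2) * (μ * z.2 - σ / 2 * z.2 ^ 2)) := by
    unfold Ham; ring
  rw [this]
  nlinarith [mul_pos hG hW]

include hμ hσ in
/-- Lower bounds for `G = p - p²` and `W = μq - (σ/2)q²` on the level set `G⬝W = c₀`. -/
lemma orbit_bounds {z : ℝ × ℝ} {c₀ : ℝ} (hz : z ∈ Omg μ σ) (hc₀ : 0 < c₀)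
    (hham : Ham μ σ z = -c₀) :
    2 * σ * c₀ / μ ^ 2 ≤ z.1 - z.1 ^ 2 ∧ 4 * c₀ ≤ μ * z.2 - σ / 2 * z.2 ^ 2 := by
  obtain ⟨⟨h10, h11⟩, h20, h21⟩ := hz
  have hG : 0 < z.1 - z.1 ^ 2 := by nlinarith
  have h21' : z.2 * σ < 2 * μ := (lt_div_iff₀ hσ).mp h21
  have hW : 0 < μ * z.2 - σ / 2 * z.2 ^ 2 := by
    nlinarith [mul_pos h20 (sub_pos.mpr h21')]
  have hGW : (z.1 - z.1 ^ 2) * (μ * z.2 - σ / 2 * z.2 ^ 2) = c₀ := by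
    have : Ham μ σ z = -((z.1 - z.1 ^ 2) * (μ * z.2 - σ / 2 * z.2 ^ 2)) := by
      unfold Ham; ring
    rw [this] at hham; linarith
  have hWmax : 2 * σ * (μ * z.2 - σ / 2 * z.2 ^ 2) ≤ μ ^ 2 := by
    nlinarith [sq_nonneg (μ - σ * z.2)]
  have hGmax : z.1 - z.1 ^ 2 ≤ 1 / 4 := by nlinarith [sq_nonneg (z.1 - 1/2)]
  constructor
  · rw [div_le_iff₀ (by positivity)]
    nlinarith [mul_le_mul_of_nonneg_left hWmax hG.le]
  · nlinarith [mul_le_mul_of_nonneg_right hGmax hW.le]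

/-- The rotation rate. -/
noncomputable def rotRate (μ σ c₀ : ℝ) : ℝ := min (8 * c₀) (2 * σ ^ 2 * c₀ / μ ^ 2)

include hμ hσ in
lemma rotRate_pos {c₀ : ℝ} (hc₀ : 0 < c₀) : 0 < rotRate μ σ c₀ :=
  lt_min (by positivity) (by positivity)

include hμ hσ in
/-- On any time interval avoiding the symmetry line `q = μ/σ`, the solution spends at most
`π / rotRate` time (the polar angle around the center rotates at uniform speed). -/
lemma escape {Z : ℝ → ℝ × ℝ} {c₀ : ℝ} (hc₀ : 0 < c₀)
    (hZd : ∀ t, HasDerivAt Z (vf μ σ (Z t)) t)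
    (hmem : ∀ t, Z t ∈ Omg μ σ)
    (hham : ∀ t, Ham μ σ (Z t) = -c₀)
    {a b : ℝ} (hab : a ≤ b) (hne : ∀ s ∈ Icc a b, (Z s).2 ≠ μ / σ) :
    b - a ≤ π / rotRate μ σ c₀ := by
  have hρ : 0 < rotRate μ σ c₀ := rotRate_pos hμ hσ hc₀
  set F : ℝ → ℝ := fun s => arctan (((Z s).1 - 1 / 2) / (μ / σ - (Z s).2)) with hFdef
  have hF : ∀ s ∈ Icc a b, ∃ v', HasDerivAt F v' s ∧ rotRate μ σ c₀ ≤ v' := by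
    intro s hs
    have hd : μ / σ - (Z s).2 ≠ 0 := sub_ne_zero.mpr (Ne.symm (hne s hs))
    have hu : HasDerivAt (fun r => (Z r).1 - 1 / 2) ((vf μ σ (Z s)).1) s :=
      (hasDerivAt_comp_fst (hZd s)).sub_const _
    have hv : HasDerivAt (fun r => μ / σ - (Z r).2) (-(vf μ σ (Z s)).2) s :=
      (hasDerivAt_comp_snd (hZd s)).const_sub _
    have hq := (hu.div hv hd).arctan
    refine ⟨_, hq, ?_⟩
    clear hq
    obtain ⟨hG, hW⟩ := orbit_bounds hμ hσ (hmem s) hc₀ (hham s)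
    set p := (Z s).1 with hp
    set q := (Z s).2 with hqq
    have hd2 : 0 < (μ / σ - q) ^ 2 :=
      lt_of_le_of_ne (sq_nonneg _) (Ne.symm (pow_ne_zero 2 hd))
    have hvf1 : (vf μ σ (Z s)).1 = μ * (p - p ^ 2) + σ * (p ^ 2 - p) * q := rfl
    have hvf2 : (vf μ σ (Z s)).2 = μ * (2 * p - 1) * q + σ / 2 * (1 - 2 * p) * q ^ 2 := rfl
    have harith : ∀ u d N : ℝ, d ≠ 0 →
        1 / (1 + (u / d) ^ 2) * (N / d ^ 2) = N / (d ^ 2 + u ^ 2) := by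
      intro u d N hd0
      have h1 : d ^ 2 ≠ 0 := pow_ne_zero 2 hd0
      field_simp
    simp only [Pi.div_apply]
    rw [hvf1, hvf2, harith _ _ _ hd]
    have hsd : μ - σ * q = σ * (μ / σ - q) := by field_simp
    have h1 : μ * (p - p ^ 2) + σ * (p ^ 2 - p) * q = (p - p ^ 2) * (σ * (μ / σ - q)) := by
      rw [← hsd]; ring
    have hnum : (μ * (p - p ^ 2) + σ * (p ^ 2 - p) * q) * (μ / σ - q) -
        (p - 1 / 2) * -(μ * (2 * p - 1) * q + σ / 2 * (1 - 2 * p) * q ^ 2)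
        = σ * (p - p ^ 2) * (μ / σ - q) ^ 2
          + 2 * (μ * q - σ / 2 * q ^ 2) * (p - 1 / 2) ^ 2 := by
      rw [h1]; ring
    rw [hnum, le_div_iff₀ (by positivity)]
    have hr1 : rotRate μ σ c₀ ≤ 8 * c₀ := min_le_left _ _
    have hr2 : rotRate μ σ c₀ ≤ 2 * σ ^ 2 * c₀ / μ ^ 2 := min_le_right _ _
    have hσG : 2 * σ ^ 2 * c₀ / μ ^ 2 ≤ σ * (p - p ^ 2) := by
      have hh := mul_le_mul_of_nonneg_left hG hσ.le
      calc 2 * σ ^ 2 * c₀ / μ ^ 2 = σ * (2 * σ * c₀ / μ ^ 2) := by ring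
      _ ≤ σ * (p - p ^ 2) := hh
    nlinarith [mul_le_mul_of_nonneg_right (le_trans hr2 hσG) (sq_nonneg (μ / σ - q)),
      mul_le_mul_of_nonneg_right
        (le_trans hr1 (by linarith : 8 * c₀ ≤ 2 * (μ * q - σ / 2 * q ^ 2))) (sq_nonneg (p - 1 / 2))]
  have hcont : ContinuousOn F (Icc a b) :=
    fun s hs => ((hF s hs).choose_spec.1).continuousAt.continuousWithinAt
  have hdiff : DifferentiableOn ℝ F (interior (Icc a b)) := by
    rw [interior_Icc]
    exact fun s hs => ((hF s (Ioo_subset_Icc_self hs)).choose_spec.1).differentiableAt.differentiableWithinAt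
  have hbound : ∀ s ∈ interior (Icc a b), rotRate μ σ c₀ ≤ deriv F s := by
    rw [interior_Icc]
    intro s hs
    obtain ⟨v', hv', hρv⟩ := hF s (Ioo_subset_Icc_self hs)
    rwa [hv'.deriv]
  have hmvt := (convex_Icc a b).mul_sub_le_image_sub_of_le_deriv hcont hdiff hbound
    a ⟨le_refl a, hab⟩ b ⟨hab, le_refl b⟩ hab
  have hFa : -(π / 2) < F a := neg_pi_div_two_lt_arctan _
  have hFb : F b < π / 2 := arctan_lt_pi_div_two _
  rw [le_div_iff₀ hρ]
  nlinarith

include hμ hσ in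
lemma exists_cross {Z : ℝ → ℝ × ℝ} {c₀ : ℝ} (hc₀ : 0 < c₀)
    (hZd : ∀ t, HasDerivAt Z (vf μ σ (Z t)) t)
    (hmem : ∀ t, Z t ∈ Omg μ σ)
    (hham : ∀ t, Ham μ σ (Z t) = -c₀) (a : ℝ) :
    ∃ t ∈ Icc a (a + (π / rotRate μ σ c₀ + 1)), (Z t).2 = μ / σ := by
  have hρ : 0 < rotRate μ σ c₀ := rotRate_pos hμ hσ hc₀
  have hπρ : 0 ≤ π / rotRate μ σ c₀ := div_nonneg pi_pos.le hρ.le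
  by_contra h
  push_neg at h
  have := escape hμ hσ hc₀ hZd hmem hham (a := a) (b := a + (π / rotRate μ σ c₀ + 1))
    (by linarith) h
  linarith

lemma glob_unique {v : ℝ × ℝ → ℝ × ℝ} {L : ℝ≥0} (hL : LipschitzWith L v)
    {Y₁ Y₂ : ℝ → ℝ × ℝ} (h1 : ∀ t, HasDerivAt Y₁ (v (Y₁ t)) t)
    (h2 : ∀ t, HasDerivAt Y₂ (v (Y₂ t)) t) {t₀ : ℝ} (he : Y₁ t₀ = Y₂ t₀) (t : ℝ) :
    Y₁ t = Y₂ t := by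
  have ht : t ∈ Ioo (min t t₀ - 1) (max t t₀ + 1) :=
    ⟨by linarith [min_le_left t t₀], by linarith [le_max_left t t₀]⟩
  have ht0 : t₀ ∈ Ioo (min t t₀ - 1) (max t t₀ + 1) :=
    ⟨by linarith [min_le_right t t₀], by linarith [le_max_right t t₀]⟩
  exact ODE_solution_unique_of_mem_Ioo (s := fun _ => (univ : Set (ℝ × ℝ)))
    (fun _ _ => hL.lipschitzOnWith (s := univ)) ht0
    (fun r _ => ⟨h1 r, trivial⟩) (fun r _ => ⟨h2 r, trivial⟩) he ht

include hμ hσ in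
lemma vf_reflect (z : ℝ × ℝ) :
    vf μ σ (z.1, 2 * μ / σ - z.2) = (-(vf μ σ z).1, (vf μ σ z).2) := by
  have hσ' : σ ≠ 0 := ne_of_gt hσ
  unfold vf
  apply Prod.ext
  · simp only
    field_simp
    ring
  · simp only
    field_simp
    ring

include hμ hσ in
/-- Reflection symmetry: if the solution crosses the line `q = μ/σ` at time `t₁`, it is
symmetric (up to the reflection `q ↦ 2μ/σ - q`) about `t₁`. -/
lemma reflect_eq {Z : ℝ → ℝ × ℝ}
    (hZd : ∀ t, HasDerivAt Z (vft μ σ (Z t)) t)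
    (hmem : ∀ t, Z t ∈ Omg μ σ) {t₁ : ℝ} (hcross : (Z t₁).2 = μ / σ) :
    ∀ t, Z t = ((Z (2 * t₁ - t)).1, 2 * μ / σ - (Z (2 * t₁ - t)).2) := by
  obtain ⟨L, hL⟩ := vft_lipschitz hμ hσ
  set Z₁ : ℝ → ℝ × ℝ := fun t => ((Z (2 * t₁ - t)).1, 2 * μ / σ - (Z (2 * t₁ - t)).2) with hZ₁
  have hZ₁mem : ∀ t, Z₁ t ∈ Omg μ σ := by
    intro t
    obtain ⟨ha, hb⟩ := hmem (2 * t₁ - t)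
    refine ⟨ha, ?_, ?_⟩
    · show (0:ℝ) < 2 * μ / σ - (Z (2 * t₁ - t)).2
      linarith [hb.2]
    · show 2 * μ / σ - (Z (2 * t₁ - t)).2 < 2 * μ / σ
      linarith [hb.1]
  have hZ₁d : ∀ t, HasDerivAt Z₁ (vft μ σ (Z₁ t)) t := by
    intro t
    have hinner : HasDerivAt (fun s : ℝ => 2 * t₁ - s) (-1 : ℝ) t := by
      simpa using (hasDerivAt_id t).const_sub (2 * t₁)
    have hrefl : HasDerivAt (fun s => Z (2 * t₁ - s)) (-vft μ σ (Z (2 * t₁ - t))) t := by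
      have := (hZd (2 * t₁ - t)).scomp t hinner
      simpa [Function.comp_def] using this
    have h1 : HasDerivAt (fun s => (Z (2 * t₁ - s)).1)
        (-(vft μ σ (Z (2 * t₁ - t))).1) t := by
      simpa using hasDerivAt_comp_fst hrefl
    have h2 : HasDerivAt (fun s => 2 * μ / σ - (Z (2 * t₁ - s)).2)
        ((vft μ σ (Z (2 * t₁ - t))).2) t := by
      simpa using (hasDerivAt_comp_snd hrefl).const_sub (2 * μ / σ)
    have hd := h1.prodMk h2
    have hOm := hmem (2 * t₁ - t)
    have hOm' := Omg_subset_Rect μ σ hOm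
    have hOm1' := Omg_subset_Rect μ σ (hZ₁mem t)
    have e1 : vft μ σ (Z (2 * t₁ - t)) = vf μ σ (Z (2 * t₁ - t)) :=
      vft_eq_vf hμ hσ hOm'.1 hOm'.2
    have e2 : vft μ σ (Z₁ t) = vf μ σ (Z₁ t) := vft_eq_vf hμ hσ hOm1'.1 hOm1'.2
    rw [e2]
    have e3 : vf μ σ (Z₁ t) = (-(vf μ σ (Z (2 * t₁ - t))).1, (vf μ σ (Z (2 * t₁ - t))).2) :=
      vf_reflect hμ hσ _
    rw [e3, ← e1]
    exact hd
  have heq : Z t₁ = Z₁ t₁ := by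
    have h2t : 2 * t₁ - t₁ = t₁ := by ring
    rw [hZ₁]
    simp only [h2t]
    apply Prod.ext
    · rfl
    · simp only
      rw [hcross]
      ring
  exact glob_unique hL hZd hZ₁d heq

include hμ hσ in
/-- Periodicity of the global solution. -/
lemma periodic_of_orbit {Z : ℝ → ℝ × ℝ} {c₀ : ℝ} (hc₀ : 0 < c₀)
    (hZd : ∀ t, HasDerivAt Z (vft μ σ (Z t)) t)
    (hmem : ∀ t, Z t ∈ Omg μ σ)
    (hham : ∀ t, Ham μ σ (Z t) = -c₀) :
    ∃ τ > (0 : ℝ), ∀ t, Z (t + τ) = Z t := by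
  have hZdvf : ∀ t, HasDerivAt Z (vf μ σ (Z t)) t := by
    intro t
    have h' := Omg_subset_Rect μ σ (hmem t)
    rw [← vft_eq_vf hμ hσ h'.1 h'.2]
    exact hZd t
  obtain ⟨t₁, _, hcross₁⟩ := exists_cross hμ hσ hc₀ hZdvf hmem hham 0
  obtain ⟨t₂, ht₂mem, hcross₂⟩ := exists_cross hμ hσ hc₀ hZdvf hmem hham (t₁ + 1)
  have ht₁₂ : t₁ + 1 ≤ t₂ := ht₂mem.1
  have h₁ := reflect_eq hμ hσ hZd hmem hcross₁
  have h₂ := reflect_eq hμ hσ hZd hmem hcross₂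
  refine ⟨2 * (t₂ - t₁), by linarith, fun t => ?_⟩
  have e1 : 2 * t₂ - (t + 2 * (t₂ - t₁)) = 2 * t₁ - t := by ring
  have h2t := h₂ (t + 2 * (t₂ - t₁))
  rw [e1] at h2t
  have h1t := h₁ t
  rw [h2t, h1t]

/-- Generic agreement lemma: two solutions of the same locally-Lipschitz ODE agreeing at `0`
agree on `[0, T]`, provided the first one stays well inside the Lipschitz region. -/
lemma eqon_fwd {v : ℝ × ℝ → ℝ × ℝ} {s : Set (ℝ × ℝ)} {L : ℝ≥0} (hv : LipschitzOnWith L v s)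
    {Y W : ℝ → ℝ × ℝ} {T : ℝ}
    (hY : ∀ t ∈ Icc 0 T, HasDerivAt Y (v (Y t)) t)
    (hW : ∀ t ∈ Icc 0 T, HasDerivAt W (v (W t)) t)
    (hYs : ∀ t ∈ Icc 0 T, Y t ∈ s)
    (hball : ∀ t ∈ Icc 0 T, closedBall (Y t) 1 ⊆ s)
    (h00 : Y 0 = W 0) : ∀ t ∈ Icc (0:ℝ) T, Y t = W t := by
  by_cases hT : 0 ≤ T
  swap
  · exact fun t ht => absurd (ht.1.trans ht.2) hT
  set A := {r ∈ Icc (0:ℝ) T | ∀ t' ∈ Icc 0 r, Y t' = W t'} with hAdef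
  have h0A : 0 ∈ A := by
    refine ⟨⟨le_refl 0, hT⟩, fun t' ht' => ?_⟩
    have : t' = 0 := le_antisymm ht'.2 ht'.1
    rw [this, h00]
  have hbdd : BddAbove A := ⟨T, fun r hr => hr.1.2⟩
  set c := sSup A with hcdef
  have hc0 : 0 ≤ c := le_csSup hbdd h0A
  have hcT : c ≤ T := csSup_le ⟨0, h0A⟩ fun r hr => hr.1.2
  have heqlt : ∀ t', 0 ≤ t' → t' < c → Y t' = W t' := by
    intro t' h0' hlt
    obtain ⟨r, hrA, hr⟩ := exists_lt_of_lt_csSup ⟨0, h0A⟩ hlt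
    exact hrA.2 t' ⟨h0', hr.le⟩
  have heqc : Y c = W c := by
    rcases eq_or_lt_of_le hc0 with h | h
    · rw [← h]; exact h00
    · have h1 : Filter.Tendsto Y (nhdsWithin c (Iio c)) (nhds (Y c)) :=
        (hY c ⟨hc0, hcT⟩).continuousAt.continuousWithinAt
      have h2 : Filter.Tendsto W (nhdsWithin c (Iio c)) (nhds (W c)) :=
        (hW c ⟨hc0, hcT⟩).continuousAt.continuousWithinAt
      have hev : Y =ᶠ[nhdsWithin c (Iio c)] W := by
        have hmem' : Ioo 0 c ∈ nhdsWithin c (Iio c) :=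
          Filter.inter_mem (mem_nhdsWithin_of_mem_nhds (Ioi_mem_nhds h)) self_mem_nhdsWithin
        exact Filter.eventually_of_mem hmem' fun r hr => heqlt r hr.1.le hr.2
      exact tendsto_nhds_unique (h1.congr' hev) h2
  have heqle : ∀ t' ∈ Icc 0 c, Y t' = W t' := by
    intro t' ht'
    rcases eq_or_lt_of_le ht'.2 with h | h
    · rw [h]; exact heqc
    · exact heqlt t' ht'.1 h
  have hcT' : ¬c < T := by
    intro hlt
    obtain ⟨δ, hδ, hcont⟩ := Metric.continuousAt_iff.mp (hW c ⟨hc0, hcT⟩).continuousAt 1 one_pos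
    set δ₀ := min (δ / 2) (T - c) with hδ₀def
    have hδ₀ : 0 < δ₀ := lt_min (by linarith) (by linarith)
    have hsub : Icc c (c + δ₀) ⊆ Icc 0 T := by
      apply Icc_subset_Icc hc0
      have : δ₀ ≤ T - c := min_le_right _ _
      linarith
    have heqon : EqOn Y W (Icc c (c + δ₀)) := by
      apply ODE_solution_unique_of_mem_Icc_right
        (v := fun _ z => v z) (s := fun _ => s) (fun _ _ => hv)
      · exact fun r hr => (hY r (hsub hr)).continuousAt.continuousWithinAt
      · exact fun r hr => (hY r (hsub (Ico_subset_Icc_self hr))).hasDerivWithinAt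
      · exact fun r hr => hYs r (hsub (Ico_subset_Icc_self hr))
      · exact fun r hr => (hW r (hsub hr)).continuousAt.continuousWithinAt
      · exact fun r hr => (hW r (hsub (Ico_subset_Icc_self hr))).hasDerivWithinAt
      · intro r hr
        apply hball c ⟨hc0, hcT⟩
        rw [mem_closedBall, heqc]
        have hdist : dist r c < δ := by
          rw [Real.dist_eq, abs_lt]
          have h1 : δ₀ ≤ δ / 2 := min_le_left _ _
          constructor <;> [linarith [hr.1]; linarith [hr.2]]
        exact (hcont hdist).le
      · exact heqc
    have hcA : c + δ₀ ∈ A := by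
      refine ⟨⟨by linarith, by linarith [min_le_right (δ/2) (T - c)]⟩, fun t' ht' => ?_⟩
      rcases le_or_gt t' c with h | h
      · exact heqle t' ⟨ht'.1, h⟩
      · exact heqon ⟨h.le, ht'.2⟩
    have : c + δ₀ ≤ c := le_csSup hbdd hcA
    linarith
  have hceq : c = T := le_antisymm hcT (not_lt.mp hcT')
  intro t ht
  exact heqle t ⟨ht.1, hceq ▸ ht.2⟩

include hμ hσ in
lemma rect_subset_ball : Rect μ σ ⊆ closedBall (0 : ℝ × ℝ) (bigM μ σ) := by
  intro z hz
  obtain ⟨⟨h10, h11⟩, h20, h21⟩ := hz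
  have hqs : 0 < 2 * μ / σ := qs_pos hμ hσ
  rw [mem_closedBall_zero_iff, Prod.norm_def]
  unfold bigM
  apply max_le
  · rw [Real.norm_eq_abs, abs_le]; constructor <;> linarith
  · rw [Real.norm_eq_abs, abs_le]; constructor <;> linarith

include hμ hσ in
/-- The global solution agrees with any local solution on an order-connected set containing 0. -/
lemma eq_on_I {Z : ℝ → ℝ × ℝ} (hZd : ∀ t, HasDerivAt Z (vf μ σ (Z t)) t)
    (hmem : ∀ t, Z t ∈ Omg μ σ)
    {I : Set ℝ} (hI : I.OrdConnected) (h0 : (0:ℝ) ∈ I) {Wf : ℝ → ℝ × ℝ}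
    (hW : ∀ t ∈ I, HasDerivAt Wf (vf μ σ (Wf t)) t) (h00 : Z 0 = Wf 0) :
    ∀ t ∈ I, Z t = Wf t := by
  obtain ⟨L, hv⟩ := vf_lipschitzOnWith μ σ (bigM μ σ + 2)
  have hZs0 : ∀ t, Z t ∈ closedBall (0 : ℝ × ℝ) (bigM μ σ) :=
    fun t => rect_subset_ball hμ hσ (Omg_subset_Rect μ σ (hmem t))
  have hZs : ∀ t, Z t ∈ closedBall (0 : ℝ × ℝ) (bigM μ σ + 2) :=
    fun t => closedBall_subset_closedBall (by linarith) (hZs0 t)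
  have hball : ∀ t, closedBall (Z t) 1 ⊆ closedBall (0 : ℝ × ℝ) (bigM μ σ + 2) := by
    intro t w hw
    rw [mem_closedBall] at *
    calc dist w 0 ≤ dist w (Z t) + dist (Z t) 0 := dist_triangle _ _ _
    _ ≤ 1 + bigM μ σ := add_le_add hw (hZs0 t)
    _ ≤ bigM μ σ + 2 := by linarith
  intro t ht
  rcases le_or_gt 0 t with hpos | hneg
  · have hsub : Icc (0:ℝ) t ⊆ I := hI.out h0 ht
    exact eqon_fwd hv (fun r _ => hZd r) (fun r hr => hW r (hsub hr))
      (fun r _ => hZs r) (fun r _ => hball r) h00 t ⟨hpos, le_refl t⟩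
  · -- backward: reverse time
    have hsub : Icc t 0 ⊆ I := hI.out ht h0
    have hv' : LipschitzOnWith (1 * L) (fun z => -vf μ σ z) (closedBall 0 (bigM μ σ + 2)) :=
      LipschitzWith.id.neg.comp_lipschitzOnWith hv
    have hZd' : ∀ r, HasDerivAt (fun r' => Z (-r')) (-vf μ σ (Z (-r))) r := by
      intro r
      have hinner : HasDerivAt (fun s : ℝ => -s) (-1 : ℝ) r := hasDerivAt_neg r
      have := (hZd (-r)).scomp r hinner
      simpa [Function.comp_def] using this
    have hW' : ∀ r ∈ Icc 0 (-t), HasDerivAt (fun r' => Wf (-r')) (-vf μ σ (Wf (-r))) r := by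
      intro r hr
      have hmemI : -r ∈ I := hsub ⟨by linarith [hr.2], by linarith [hr.1]⟩
      have hinner : HasDerivAt (fun s : ℝ => -s) (-1 : ℝ) r := hasDerivAt_neg r
      have := (hW (-r) hmemI).scomp r hinner
      simpa [Function.comp_def] using this
    have := eqon_fwd hv' (fun r _ => hZd' r) hW'
      (fun r _ => hZs (-r)) (fun r _ => hball (-r)) (by simpa using h00)
      (-t) ⟨by linarith, le_refl _⟩
    simpa using this

end Main2
end PeriodicOrbitAux

open PeriodicOrbitAux Set in
/-- Every solution of ṗ = μ(p − p²) + σ(p² − p)q, q̇ = μ(2p − 1)q + (σ/2)(1 − 2p)q²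
with initial condition in the open rectangle (0,1) × (0, 2μ/σ) and different from
the equilibrium (1/2, μ/σ) is defined for all t ∈ ℝ and is periodic: it extends to
a global solution P, Q on ℝ and there is τ > 0 with
(P(t + τ), Q(t + τ)) = (P(t), Q(t)) for all t ∈ ℝ. -/
theorem periodic_orbits_in_rectangle (μ σ : ℝ) (hμ : 0 < μ) (hσ : 0 < σ)
    (p₀ q₀ : ℝ) (hp₀ : p₀ ∈ Set.Ioo (0 : ℝ) 1) (hq₀ : q₀ ∈ Set.Ioo 0 (2 * μ / σ))
    (hne : (p₀, q₀) ≠ (1 / 2, μ / σ))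
    (I : Set ℝ) (hI : I.OrdConnected) (h0 : (0 : ℝ) ∈ I)
    (p q : ℝ → ℝ) (hp0 : p 0 = p₀) (hq0 : q 0 = q₀)
    (hsol : ∀ t ∈ I,
      HasDerivAt p (μ * (p t - (p t) ^ 2) + σ * ((p t) ^ 2 - p t) * q t) t ∧
      HasDerivAt q (μ * (2 * p t - 1) * q t + σ / 2 * (1 - 2 * p t) * (q t) ^ 2) t) :
    ∃ P Q : ℝ → ℝ,
      (∀ t : ℝ,
        HasDerivAt P (μ * (P t - (P t) ^ 2) + σ * ((P t) ^ 2 - P t) * Q t) t ∧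
        HasDerivAt Q (μ * (2 * P t - 1) * Q t + σ / 2 * (1 - 2 * P t) * (Q t) ^ 2) t) ∧
      (∀ t ∈ I, P t = p t ∧ Q t = q t) ∧
      ∃ τ > (0 : ℝ), ∀ t : ℝ, P (t + τ) = P t ∧ Q (t + τ) = Q t := by
  have hx₀ : ((p₀, q₀) : ℝ × ℝ) ∈ Omg μ σ := ⟨hp₀, hq₀⟩
  have hH : Ham μ σ (p₀, q₀) < 0 := ham_neg hμ hσ hx₀
  obtain ⟨Z, hZ0, hZd, hZmem⟩ := global_sol hμ hσ hx₀ hH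
  have hmem : ∀ t, Z t ∈ Omg μ σ := fun t => (hZmem t).1
  have hZdvf : ∀ t, HasDerivAt Z (vf μ σ (Z t)) t := by
    intro t
    have h' := Omg_subset_Rect μ σ (hmem t)
    rw [← vft_eq_vf hμ hσ h'.1 h'.2]
    exact hZd t
  set c₀ := -Ham μ σ (p₀, q₀) with hc₀def
  have hc₀ : 0 < c₀ := by rw [hc₀def]; linarith
  have hham : ∀ t, Ham μ σ (Z t) = -c₀ := by
    intro t
    rw [(hZmem t).2, hc₀def, neg_neg]
  refine ⟨fun t => (Z t).1, fun t => (Z t).2, ?_, ?_, ?_⟩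
  · intro t
    exact ⟨hasDerivAt_comp_fst (hZdvf t), hasDerivAt_comp_snd (hZdvf t)⟩
  · have hWd : ∀ t ∈ I, HasDerivAt (fun r => (p r, q r)) (vf μ σ (p t, q t)) t :=
      fun t ht => ((hsol t ht).1.prodMk (hsol t ht).2)
    have h00 : Z 0 = (p 0, q 0) := by rw [hZ0, hp0, hq0]
    have heq := eq_on_I hμ hσ hZdvf hmem hI h0 hWd h00
    intro t ht
    constructor
    · show (Z t).1 = p t
      rw [heq t ht]
    · show (Z t).2 = q t
      rw [heq t ht]
  · obtain ⟨τ, hτ, hper⟩ := periodic_of_orbit hμ hσ hc₀ hZd hmem hham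
    refine ⟨τ, hτ, fun t => ⟨?_, ?_⟩⟩
    · show (Z (t + τ)).1 = (Z t).1
      rw [hper t]
    · show (Z (t + τ)).2 = (Z t).2
      rw [hper t]
end

section
/- Suppose in addition that m is T-periodic (T > 0) and m(t) > 0 for all t. Then the solution q_s of q̇ = m(t)q − (σ/2)q² with initial value q_s(0) = (exp(∫₀ᵀ m(t₁) dt₁) − 1) / ((σ/2) ∫₀ᵀ exp(∫₀^{t₁} m(t₂) dt₂) dt₁) is T-periodic, and it attracts all positive solutions: for every solution q with q(0) > 0 one has |q(t) − q_s(t)| → 0 as t → ∞. -/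
open Filter Topology

lemma my_lin_unique (c d : ℝ → ℝ) (hc : Continuous c)
    (hd : ∀ t, HasDerivAt d (c t * d t) t) (h0 : d 0 = 0) : ∀ t, d t = 0 := by
  set C : ℝ → ℝ := fun t => ∫ s in (0:ℝ)..t, c s with hCdef
  have hC : ∀ t, HasDerivAt C (c t) t := fun t =>
    (hc.integral_hasStrictDerivAt 0 t).hasDerivAt
  have key : ∀ t, HasDerivAt (fun u => d u * Real.exp (-C u)) 0 t := by
    intro t
    have h1 : HasDerivAt (fun u => d u * Real.exp (-C u)) _ t := (hd t).mul ((hC t).neg.exp)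
    convert h1 using 1
    simp only [Pi.neg_apply]
    ring
  have hconst : ∀ t, d t * Real.exp (-C t) = d 0 * Real.exp (-C 0) := fun t =>
    is_const_of_deriv_eq_zero (fun x => (key x).differentiableAt)
      (fun x => (key x).deriv) t 0
  intro t
  have := hconst t
  rw [h0, zero_mul] at this
  rcases mul_eq_zero.mp this with h | h
  · exact h
  · exact absurd h (Real.exp_ne_zero _)

/-- If m is continuous, T-periodic (T > 0) and everywhere positive, then the
solution q_s of q̇ = m(t)q − (σ/2)q² with initial value
q_s(0) = (exp(∫₀ᵀ m) − 1) / ((σ/2) ∫₀ᵀ exp(∫₀^{t₁} m) dt₁) is T-periodic, and it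
attracts every solution with positive initial value:
|q(t) − q_s(t)| → 0 as t → ∞. -/
theorem periodic_logistic_attractor (σ : ℝ) (hσ : 0 < σ)
    (m : ℝ → ℝ) (hm : Continuous m) (T : ℝ) (hT : 0 < T)
    (hper : Function.Periodic m T) (hpos : ∀ t, 0 < m t)
    (qs : ℝ → ℝ)
    (hqs0 : qs 0 = (Real.exp (∫ t₁ in (0 : ℝ)..T, m t₁) - 1) /
      (σ / 2 * ∫ t₁ in (0 : ℝ)..T, Real.exp (∫ t₂ in (0 : ℝ)..t₁, m t₂)))
    (hqs : ∀ t : ℝ, HasDerivAt qs (m t * qs t - σ / 2 * (qs t) ^ 2) t) :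
    (∀ t : ℝ, qs (t + T) = qs t) ∧
    ∀ q : ℝ → ℝ, 0 < q 0 →
      (∀ t : ℝ, HasDerivAt q (m t * q t - σ / 2 * (q t) ^ 2) t) →
      Tendsto (fun t => |q t - qs t|) atTop (𝓝 0) := by
  -- basic objects
  set M : ℝ → ℝ := fun t => ∫ s in (0:ℝ)..t, m s with hMdef
  have hM : ∀ t, HasDerivAt M (m t) t := fun t =>
    (hm.integral_hasStrictDerivAt 0 t).hasDerivAt
  set E : ℝ → ℝ := fun t => Real.exp (M t) with hEdef
  have hE : ∀ t, HasDerivAt E (m t * E t) t := by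
    intro t
    have := (hM t).exp
    simpa [hEdef, mul_comm] using this
  have hEcont : Continuous E := continuous_iff_continuousAt.mpr
    (fun t => (hE t).continuousAt)
  have hEpos : ∀ t, 0 < E t := fun t => Real.exp_pos _
  set I : ℝ → ℝ := fun t => ∫ s in (0:ℝ)..t, E s with hIdef
  have hI : ∀ t, HasDerivAt I (E t) t := fun t =>
    (hEcont.integral_hasStrictDerivAt 0 t).hasDerivAt
  have hM0 : M 0 = 0 := intervalIntegral.integral_same
  have hI0 : I 0 = 0 := intervalIntegral.integral_same
  have hE0 : E 0 = 1 := by rw [hEdef]; simp [hM0]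
  have hMmono : StrictMono M :=
    strictMono_of_deriv_pos (by intro t; rw [(hM t).deriv]; exact hpos t)
  have hImono : StrictMono I :=
    strictMono_of_deriv_pos (by intro t; rw [(hI t).deriv]; exact hEpos t)
  have hITpos : 0 < I T := hI0 ▸ hImono hT
  have hMTpos : 0 < M T := hM0 ▸ hMmono hT
  -- the key solution formula
  have key : ∀ q : ℝ → ℝ,
      (∀ t : ℝ, HasDerivAt q (m t * q t - σ / 2 * (q t) ^ 2) t) →
      ∀ t, q t * (1 + q 0 * (σ / 2) * I t) = q 0 * E t := by
    intro q hq
    have hqc : Continuous q := continuous_iff_continuousAt.mpr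
      (fun t => (hq t).continuousAt)
    have := my_lin_unique (fun t => m t - σ / 2 * q t)
      (fun t => q t * (1 + q 0 * (σ / 2) * I t) - q 0 * E t)
      (hm.sub (continuous_const.mul hqc))
      (by
        intro t
        have h1 : HasDerivAt (fun t => q t * (1 + q 0 * (σ / 2) * I t) - q 0 * E t) _ t :=
          ((hq t).mul (((hI t).const_mul (q 0 * (σ / 2))).const_add 1)).sub
          ((hE t).const_mul (q 0))
        convert h1 using 1
        ring)
      (by simp [hI0, hE0])
    intro t
    have := this t
    linarith
  -- initial value facts
  have hIT_eq : (∫ t₁ in (0:ℝ)..T, Real.exp (∫ t₂ in (0:ℝ)..t₁, m t₂)) = I T := rfl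
  have hMT_eq : (∫ t₁ in (0:ℝ)..T, m t₁) = M T := rfl
  have has_pos : 0 < qs 0 := by
    rw [hqs0, hMT_eq, hIT_eq]
    apply div_pos
    · have h1 : Real.exp 0 < Real.exp (M T) := Real.exp_lt_exp.mpr hMTpos
      simp only [Real.exp_zero] at h1
      linarith
    · positivity
  have hdenom_ne : σ / 2 * I T ≠ 0 := by positivity
  have hasIT : qs 0 * (σ / 2) * I T = E T - 1 := by
    rw [hqs0, hMT_eq, hIT_eq]
    field_simp
    ring
  have hqsT : qs T = qs 0 := by
    have h := key qs hqs T
    rw [show (1 : ℝ) + qs 0 * (σ / 2) * I T = E T by rw [hasIT]; ring] at h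
    exact mul_right_cancel₀ (ne_of_gt (hEpos T)) (by linarith [h])
  -- periodicity
  have hperiodic : ∀ t : ℝ, qs (t + T) = qs t := by
    have hqsc : Continuous qs := continuous_iff_continuousAt.mpr
      (fun t => (hqs t).continuousAt)
    set r : ℝ → ℝ := fun t => qs (t + T) with hrdef
    have hr : ∀ t, HasDerivAt r (m t * r t - σ / 2 * (r t) ^ 2) t := by
      intro t
      have h1 : HasDerivAt (fun x => qs (x + T)) _ t := (hqs (t + T)).comp t ((hasDerivAt_id t).add_const T)
      simpa [hrdef, hper t, mul_one] using h1
    have hrc : Continuous r := hqsc.comp (continuous_id.add continuous_const)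
    have := my_lin_unique (fun t => m t - σ / 2 * (r t + qs t))
      (fun t => r t - qs t)
      (hm.sub (continuous_const.mul (hrc.add hqsc)))
      (by
        intro t
        have h1 : HasDerivAt (fun t => r t - qs t) _ t := (hr t).sub (hqs t)
        convert h1 using 1
        ring)
      (by simp [hrdef, hqsT])
    intro t
    have := this t
    simp only [hrdef] at this
    linarith
  refine ⟨hperiodic, ?_⟩
  intro q hq0 hq
  have keyq := key q hq
  have keyqs := key qs hqs
  -- global bounds on m via periodicity and compactness
  obtain ⟨tmax, _, htmax'⟩ := isCompact_Icc.exists_isMaxOn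
    (Set.nonempty_Icc.mpr hT.le) hm.continuousOn
  obtain ⟨tmin, _, htmin'⟩ := isCompact_Icc.exists_isMinOn
    (Set.nonempty_Icc.mpr hT.le) hm.continuousOn
  have htmax := isMaxOn_iff.mp htmax'
  have htmin := isMinOn_iff.mp htmin'
  set K := m tmax with hKdef
  set ε := m tmin with hεdef
  have hKpos : 0 < K := hpos tmax
  have hεpos : 0 < ε := hpos tmin
  have hKb : ∀ t, m t ≤ K := by
    intro t
    obtain ⟨y, hy, hyeq⟩ := hper.exists_mem_Ico₀ hT t
    rw [hyeq]
    exact htmax y ⟨hy.1, hy.2.le⟩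
  have hεb : ∀ t, ε ≤ m t := by
    intro t
    obtain ⟨y, hy, hyeq⟩ := hper.exists_mem_Ico₀ hT t
    rw [hyeq]
    exact htmin y ⟨hy.1, hy.2.le⟩
  -- M grows at least linearly
  have hMlow : ∀ t : ℝ, 0 ≤ t → ε * t ≤ M t := by
    intro t ht
    have h1 : (∫ s in (0:ℝ)..t, ε) ≤ ∫ s in (0:ℝ)..t, m s :=
      intervalIntegral.integral_mono_on ht (intervalIntegrable_const)
        (hm.intervalIntegrable _ _) (fun x _ => hεb x)
    simpa [mul_comm] using h1
  have hMtop : Tendsto M atTop atTop := by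
    apply tendsto_atTop_mono' atTop
      ((eventually_ge_atTop (0:ℝ)).mono (fun t ht => hMlow t ht))
    exact Tendsto.const_mul_atTop hεpos tendsto_id
  have hEtop : Tendsto E atTop atTop := Real.tendsto_exp_atTop.comp hMtop
  -- difference bound for M
  have hMdiff : ∀ s t : ℝ, s ≤ t → M t - M s ≤ K * (t - s) := by
    intro s t hst
    have hadd : M s + (∫ u in s..t, m u) = M t :=
      intervalIntegral.integral_add_adjacent_intervals
        (hm.intervalIntegrable _ _) (hm.intervalIntegrable _ _)
    have h1 : (∫ u in s..t, m u) ≤ ∫ u in s..t, K :=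
      intervalIntegral.integral_mono_on hst (hm.intervalIntegrable _ _)
        intervalIntegrable_const (fun x _ => hKb x)
    rw [intervalIntegral.integral_const, smul_eq_mul] at h1
    linarith [h1]
  -- I dominates exp(-K) * E for t ≥ 1
  have hIE : ∀ t : ℝ, 1 ≤ t → Real.exp (-K) * E t ≤ I t := by
    intro t ht
    have hadd : I (t - 1) + (∫ s in (t-1)..t, E s) = I t :=
      intervalIntegral.integral_add_adjacent_intervals
        (hEcont.intervalIntegrable _ _) (hEcont.intervalIntegrable _ _)
    have hI1 : (0:ℝ) ≤ I (t - 1) := by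
      have := hImono.monotone (show (0:ℝ) ≤ t - 1 by linarith)
      rwa [hI0] at this
    have hpt : ∀ s ∈ Set.Icc (t-1) t, Real.exp (-K) * E t ≤ E s := by
      intro s hs
      have h1 : M t - M s ≤ K * (t - s) := hMdiff s t hs.2
      have h2 : K * (t - s) ≤ K := by
        have : t - s ≤ 1 := by linarith [hs.1]
        nlinarith
      have h3 : M t - K ≤ M s := by linarith
      calc Real.exp (-K) * E t = Real.exp (M t - K) := by
            rw [hEdef]; rw [← Real.exp_add]; ring_nf
        _ ≤ Real.exp (M s) := Real.exp_le_exp.mpr h3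
        _ = E s := rfl
    have h1 : (∫ s in (t-1)..t, Real.exp (-K) * E t) ≤ ∫ s in (t-1)..t, E s :=
      intervalIntegral.integral_mono_on (by linarith) intervalIntegrable_const
        (hEcont.intervalIntegrable _ _) hpt
    rw [intervalIntegral.integral_const, smul_eq_mul] at h1
    have : (t - (t-1)) = 1 := by ring
    rw [this, one_mul] at h1
    linarith
  have hItop : Tendsto I atTop atTop := by
    apply tendsto_atTop_mono' atTop
      ((eventually_ge_atTop (1:ℝ)).mono (fun t ht => hIE t ht))
    exact Tendsto.const_mul_atTop (Real.exp_pos _) hEtop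
  -- the quantitative bound
  set a := q 0 with hadef
  set b := qs 0 with hbdef
  set B := |a - b| * Real.exp K / (a * b * (σ/2)^2) with hBdef
  have hbound : ∀ t : ℝ, 1 ≤ t → |q t - qs t| ≤ B * (I t)⁻¹ := by
    intro t ht
    have hItpos : 0 < I t :=
      lt_of_lt_of_le (by positivity) (hIE t ht)
    have hEI : E t ≤ Real.exp K * I t := by
      have h1 := hIE t ht
      have h2 := mul_le_mul_of_nonneg_left h1 (Real.exp_pos K).le
      rw [← mul_assoc, ← Real.exp_add] at h2
      simpa using h2
    have hdiff : (q t - qs t) *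
        ((1 + a*(σ/2)*I t) * (1 + b*(σ/2)*I t)) = (a - b) * E t := by
      linear_combination (1 + b*(σ/2)*I t) * keyq t - (1 + a*(σ/2)*I t) * keyqs t
    have hDa : (0:ℝ) < 1 + a*(σ/2)*I t := by positivity
    have hDb : (0:ℝ) < 1 + b*(σ/2)*I t := by positivity
    have habs : |q t - qs t| * ((1 + a*(σ/2)*I t) * (1 + b*(σ/2)*I t))
        = |a - b| * E t := by
      have h := congrArg abs hdiff
      rwa [abs_mul, abs_mul, abs_mul, abs_of_pos hDa, abs_of_pos hDb,
        abs_of_pos (hEpos t)] at h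
    have hX : |q t - qs t| * ((a*(σ/2)*I t) * (b*(σ/2)*I t))
        ≤ |a - b| * (Real.exp K * I t) := by
      calc |q t - qs t| * ((a*(σ/2)*I t) * (b*(σ/2)*I t))
          ≤ |q t - qs t| * ((1 + a*(σ/2)*I t) * (1 + b*(σ/2)*I t)) := by
            apply mul_le_mul_of_nonneg_left _ (abs_nonneg _)
            apply mul_le_mul (by linarith) (by linarith) (by positivity) (by linarith)
        _ = |a - b| * E t := habs
        _ ≤ |a - b| * (Real.exp K * I t) :=
            mul_le_mul_of_nonneg_left hEI (abs_nonneg _)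
    rw [hBdef, mul_comm (|a - b| * Real.exp K / (a * b * (σ/2)^2)) _,
      ← div_eq_inv_mul, le_div_iff₀ hItpos, div_eq_mul_inv, mul_comm _ ((a * b * (σ/2)^2)⁻¹),
      ← div_eq_inv_mul, le_div_iff₀ (by positivity : (0:ℝ) < a * b * (σ/2)^2)]
    have hfin : |q t - qs t| * I t * (a * b * (σ/2)^2) * I t
        ≤ |a - b| * Real.exp K * I t := by
      calc |q t - qs t| * I t * (a * b * (σ/2)^2) * I t
          = |q t - qs t| * ((a*(σ/2)*I t) * (b*(σ/2)*I t)) := by ring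
        _ ≤ |a - b| * (Real.exp K * I t) := hX
        _ = |a - b| * Real.exp K * I t := by ring
    exact le_of_mul_le_mul_right hfin hItpos
  apply squeeze_zero' (Eventually.of_forall (fun t => abs_nonneg _))
    (eventually_atTop.mpr ⟨1, hbound⟩)
  have h0 : Tendsto (fun t => B * (I t)⁻¹) atTop (𝓝 (B * 0)) :=
    (tendsto_inv_atTop_zero.comp hItop).const_mul B
  simpa using h0
end

section
/- Along any solution of the plankton Hamiltonian system, the quantity γ(p(t) − 1)² q(t) is constant, equal to its initial value H = γ(p(0) − 1)² q(0). Moreover, if 0 ≤ p(0) < 1 and q(0) > 0 (so H > 0), then q(t) = (√q(0) − √(γH) t)² for all t in the maximal existence interval [0, 1/(γ(1 − p(0)))), and at the time t_e = √(q(0)/(γH)) − 1/γ one has p(t_e) = 0 and q(t_e) = H/γ. -/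
private lemma const_of_hasDerivWithinAt_zero {f : ℝ → ℝ} {s : Set ℝ} (hs : Convex ℝ s)
    (hf : ∀ x ∈ s, HasDerivWithinAt f 0 s x) {x y : ℝ} (hx : x ∈ s) (hy : y ∈ s) :
    f y = f x := by
  have h := hs.norm_image_sub_le_of_norm_hasDerivWithin_le (f' := fun _ => (0:ℝ)) (C := 0)
    hf (fun z _ => by simp) hx hy
  simp only [zero_mul, norm_le_zero_iff, sub_eq_zero] at h
  exact h

/-- Along any solution of the plankton Hamiltonian system ṗ = −γ(p − 1)²,
q̇ = 2γ(p − 1)q, the quantity γ(p(t) − 1)² q(t) is constant, equal to its initial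
value H = γ(p(0) − 1)² q(0). Moreover, if 0 ≤ p(0) < 1 and q(0) > 0 (so H > 0),
then q(t) = (√q(0) − √(γH) t)² on the maximal interval [0, 1/(γ(1 − p(0)))), and
at t_e = √(q(0)/(γH)) − 1/γ (which belongs to that interval) one has p(t_e) = 0
and q(t_e) = H/γ. -/
theorem plankton_extinction_trajectory (γ : ℝ) (hγ : 0 < γ) (p q : ℝ → ℝ)
    (hp0 : 0 ≤ p 0) (hp01 : p 0 < 1) (hq0 : 0 < q 0)
    (H : ℝ) (hH : H = γ * (p 0 - 1) ^ 2 * q 0)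
    (I : Set ℝ) (hI : I = Set.Ico 0 (1 / (γ * (1 - p 0))))
    (hsol : ∀ t ∈ I,
      HasDerivWithinAt p (-γ * (p t - 1) ^ 2) I t ∧
      HasDerivWithinAt q (2 * γ * (p t - 1) * q t) I t) :
    0 < H ∧
    (∀ t ∈ I, γ * (p t - 1) ^ 2 * q t = H) ∧
    (∀ t ∈ I, q t = (Real.sqrt (q 0) - Real.sqrt (γ * H) * t) ^ 2) ∧
    Real.sqrt (q 0 / (γ * H)) - 1 / γ ∈ I ∧
    p (Real.sqrt (q 0 / (γ * H)) - 1 / γ) = 0 ∧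
    q (Real.sqrt (q 0 / (γ * H)) - 1 / γ) = H / γ := by
  have h1p : 0 < 1 - p 0 := by linarith
  have hT : 0 < 1 / (γ * (1 - p 0)) := by positivity
  have hconv : Convex ℝ I := hI ▸ convex_Ico _ _
  have h0I : (0:ℝ) ∈ I := hI ▸ ⟨le_refl 0, hT⟩
  have hHpos : 0 < H := by
    rw [hH]; have h2 : (p 0 - 1) ^ 2 > 0 := by nlinarith
    positivity
  -- the invariant
  have hinv : ∀ t ∈ I, γ * (p t - 1) ^ 2 * q t = H := by
    intro t ht
    have hder : ∀ s ∈ I, HasDerivWithinAt (fun u => γ * (p u - 1) ^ 2 * q u) 0 I s := by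
      intro s hs
      obtain ⟨hp', hq'⟩ := hsol s hs
      have h1 : HasDerivWithinAt (fun u => γ * (p u - 1) ^ 2)
          (γ * (2 * (p s - 1) ^ 1 * (-γ * (p s - 1) ^ 2))) I s :=
        ((hp'.sub_const 1).pow 2).const_mul γ
      have h2 := h1.mul hq'
      refine h2.congr_deriv ?_
      ring
    have := const_of_hasDerivWithinAt_zero hconv hder h0I ht
    simpa [← hH] using this
  -- continuity
  have hcontp : ContinuousOn p I := fun s hs => (hsol s hs).1.continuousWithinAt
  have hcontq : ContinuousOn q I := fun s hs => (hsol s hs).2.continuousWithinAt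
  have hne : ∀ t ∈ I, q t ≠ 0 ∧ p t ≠ 1 := by
    intro t ht
    have h := hinv t ht
    constructor
    · intro h0; rw [h0] at h; simp at h; linarith
    · intro h1; rw [h1] at h; simp at h; linarith
  have hIcc : ∀ t ∈ I, Set.Icc (0:ℝ) t ⊆ I := by
    intro t ht
    rw [hI] at ht ⊢
    exact fun s hs => ⟨hs.1, lt_of_le_of_lt hs.2 ht.2⟩
  have hqpos : ∀ t ∈ I, 0 < q t := by
    intro t ht
    by_contra hcon
    push_neg at hcon
    have hlt : q t < 0 := lt_of_le_of_ne hcon (hne t ht).1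
    have ht0 : (0:ℝ) ≤ t := by rw [hI] at ht; exact ht.1
    have := intermediate_value_Icc' ht0 (hcontq.mono (hIcc t ht))
    obtain ⟨s, hs, hqs⟩ := this ⟨hlt.le, hq0.le⟩
    exact (hne s (hIcc t ht hs)).1 hqs
  have hplt : ∀ t ∈ I, p t < 1 := by
    intro t ht
    by_contra hcon
    push_neg at hcon
    have hlt : 1 < p t := lt_of_le_of_ne hcon (Ne.symm (hne t ht).2)
    have ht0 : (0:ℝ) ≤ t := by rw [hI] at ht; exact ht.1
    have := intermediate_value_Icc ht0 (hcontp.mono (hIcc t ht))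
    obtain ⟨s, hs, hps⟩ := this ⟨hp01.le, hlt.le⟩
    exact (hne s (hIcc t ht hs)).2 hps
  -- key identity : γ (1 - p t) √(q t) = √(γ H)
  have hkey : ∀ t ∈ I, γ * (1 - p t) * Real.sqrt (q t) = Real.sqrt (γ * H) := by
    intro t ht
    have hq := hqpos t ht
    have hp := hplt t ht
    have ha : 0 ≤ γ * (1 - p t) * Real.sqrt (q t) :=
      mul_nonneg (mul_nonneg hγ.le (by linarith)) (Real.sqrt_nonneg _)
    have hsq : (γ * (1 - p t) * Real.sqrt (q t)) ^ 2 = γ * H := by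
      have hs2 : Real.sqrt (q t) ^ 2 = q t := Real.sq_sqrt hq.le
      have hinvt := hinv t ht
      calc (γ * (1 - p t) * Real.sqrt (q t)) ^ 2
          = γ ^ 2 * (1 - p t) ^ 2 * Real.sqrt (q t) ^ 2 := by ring
        _ = γ ^ 2 * (1 - p t) ^ 2 * q t := by rw [hs2]
        _ = γ * H := by linear_combination γ * hinvt
    rw [← hsq, Real.sqrt_sq ha]
  -- q formula
  have hqform : ∀ t ∈ I, q t = (Real.sqrt (q 0) - Real.sqrt (γ * H) * t) ^ 2 := by
    intro t ht
    have hder : ∀ s ∈ I, HasDerivWithinAt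
        (fun u => Real.sqrt (q u) + Real.sqrt (γ * H) * u) 0 I s := by
      intro s hs
      have hq := hqpos s hs
      have h1 : HasDerivWithinAt (fun u => Real.sqrt (q u))
          (2 * γ * (p s - 1) * q s / (2 * Real.sqrt (q s))) I s :=
        (hsol s hs).2.sqrt hq.ne'
      have h2 := (hasDerivWithinAt_id s I).const_mul (Real.sqrt (γ * H))
      simp only [mul_one, id_eq] at h2
      have h3 := h1.add h2
      refine h3.congr_deriv ?_
      rw [← hkey s hs]
      have hs0 : Real.sqrt (q s) ≠ 0 := ne_of_gt (Real.sqrt_pos.mpr hq)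
      have hqs : q s = Real.sqrt (q s) * Real.sqrt (q s) := (Real.mul_self_sqrt hq.le).symm
      field_simp
      linear_combination (γ * (p s - 1)) * hqs
    have hc := const_of_hasDerivWithinAt_zero hconv hder h0I ht
    simp only [mul_zero, add_zero] at hc
    have hst : Real.sqrt (q t) = Real.sqrt (q 0) - Real.sqrt (γ * H) * t := by linarith
    rw [← Real.sq_sqrt (hqpos t ht).le, hst]
  -- the extinction time
  have hsgH : Real.sqrt (γ * H) = γ * (1 - p 0) * Real.sqrt (q 0) := (hkey 0 h0I).symm
  have hte : Real.sqrt (q 0 / (γ * H)) = 1 / (γ * (1 - p 0)) := by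
    have hγH : γ * H = (γ * (1 - p 0)) ^ 2 * q 0 := by rw [hH]; ring
    have hq' : q 0 / (γ * H) = (1 / (γ * (1 - p 0))) ^ 2 := by
      rw [hγH]; field_simp
    rw [hq', Real.sqrt_sq (by positivity)]
  have hteval : Real.sqrt (q 0 / (γ * H)) - 1 / γ = 1 / (γ * (1 - p 0)) - 1 / γ := by
    rw [hte]
  have hteI : Real.sqrt (q 0 / (γ * H)) - 1 / γ ∈ I := by
    rw [hteval, hI]
    constructor
    · have : γ * (1 - p 0) ≤ γ := by nlinarith
      have := one_div_le_one_div_of_le (by positivity : (0:ℝ) < γ * (1 - p 0)) this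
      linarith
    · have : 0 < 1 / γ := by positivity
      linarith
  set te := Real.sqrt (q 0 / (γ * H)) - 1 / γ with hte_def
  have hqte : q te = H / γ := by
    rw [hqform te hteI, hteval, hsgH]
    have h1 : γ * (1 - p 0) * (1 / (γ * (1 - p 0))) = 1 := by
      field_simp
    have h2 : Real.sqrt (q 0) ^ 2 = q 0 := Real.sq_sqrt hq0.le
    have h3 : H / γ = (1 - p 0) ^ 2 * q 0 := by rw [hH]; field_simp; ring
    rw [h3]
    have : Real.sqrt (q 0) - γ * (1 - p 0) * Real.sqrt (q 0) * (1 / (γ * (1 - p 0)) - 1 / γ)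
        = (1 - p 0) * Real.sqrt (q 0) := by
      field_simp
      ring
    rw [this]
    nlinarith [h2]
  have hpte : p te = 0 := by
    have hiv := hinv te hteI
    rw [hqte] at hiv
    have hH0 : H ≠ 0 := ne_of_gt hHpos
    have hsq1 : (p te - 1) ^ 2 = 1 := by
      field_simp at hiv
      have h' : (p te - 1) ^ 2 * (γ * H) = 1 * (γ * H) := by linear_combination (γ * H) * hiv
      exact mul_right_cancel₀ (ne_of_gt (mul_pos hγ hHpos)) h'
    have hlt := hplt te hteI
    have : (p te - 1 + 1) * (p te - 1 - 1) = 0 := by nlinarith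
    rcases mul_eq_zero.1 this with h | h
    · linarith
    · linarith
  exact ⟨hHpos, hinv, hqform, hteI, hpte, hqte⟩
end

section
/- The period function satisfies lim_{ζ → 1/2⁻} T(ζ) = +∞. -/
open Filter Topology

/-- (p, q) is a solution of the autonomous system (nps):
ṗ = −(σ/4)q + σqp², q̇ = (μ²/σ)p − σpq². -/
def IsNpsSolution (μ σ : ℝ) (p q : ℝ → ℝ) : Prop :=
  ∀ t : ℝ,
    HasDerivAt p (-(σ / 4) * q t + σ * q t * (p t) ^ 2) t ∧
    HasDerivAt q ((μ ^ 2 / σ) * p t - σ * p t * (q t) ^ 2) t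

/-- τ is the minimal period of the pair (p, q). -/
def IsMinimalPeriod (p q : ℝ → ℝ) (τ : ℝ) : Prop :=
  0 < τ ∧ (∀ t, p (t + τ) = p t ∧ q (t + τ) = q t) ∧
    ∀ τ' : ℝ, 0 < τ' → (∀ t, p (t + τ') = p t ∧ q (t + τ') = q t) → τ ≤ τ'

set_option maxHeartbeats 1000000 in
lemma nps_period_lower_bound (μ σ : ℝ) (hμ : 0 < μ) (hσ : 0 < σ) (ζ : ℝ)
    (hζ : ζ ∈ Set.Ioo (0 : ℝ) (1 / 2)) (p q : ℝ → ℝ) (hs : IsNpsSolution μ σ p q)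
    (hp0 : p 0 = ζ) (hq0 : q 0 = 0) (τ : ℝ) (hτ : IsMinimalPeriod p q τ) :
    (-Real.log (1 / 2 - ζ) - Real.log 2) / μ ≤ τ := by
  obtain ⟨hζ0, hζ2⟩ := hζ
  have hσ' : (σ : ℝ) ≠ 0 := ne_of_gt hσ
  have hp' : ∀ t, HasDerivAt p (-(σ / 4) * q t + σ * q t * (p t) ^ 2) t := fun t => (hs t).1
  have hq' : ∀ t, HasDerivAt q ((μ ^ 2 / σ) * p t - σ * p t * (q t) ^ 2) t := fun t => (hs t).2
  set H : ℝ → ℝ := fun t => (1 / 4 - p t ^ 2) * (μ ^ 2 / σ ^ 2 - q t ^ 2) with hHdef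
  -- conservation of H
  have hH : ∀ t, HasDerivAt H 0 t := by
    intro t
    have h1 := ((hasDerivAt_const t ((1:ℝ)/4)).sub ((hp' t).pow 2)).mul
      ((hasDerivAt_const t (μ ^ 2 / σ ^ 2)).sub ((hq' t).pow 2))
    refine h1.congr_deriv ?_
    simp only [Pi.sub_apply, Pi.pow_apply]
    push_cast
    field_simp
    ring
  have hHconst : ∀ t, H t = (1 / 4 - ζ ^ 2) * (μ ^ 2 / σ ^ 2) := by
    intro t
    have := is_const_of_deriv_eq_zero (f := H) (fun x => (hH x).differentiableAt)
      (fun x => (hH x).deriv) t 0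
    simpa [hHdef, hp0, hq0] using this
  have hc : 0 < (1 / 4 - ζ ^ 2) * (μ ^ 2 / σ ^ 2) := by
    have : ζ ^ 2 < 1 / 4 := by nlinarith
    have h2 : 0 < μ ^ 2 / σ ^ 2 := by positivity
    nlinarith
  -- p stays in (-1/2, 1/2)
  have hpc : Continuous p := by
    rw [continuous_iff_continuousAt]; exact fun t => (hp' t).continuousAt
  have hAcont : Continuous (fun s => 1 / 4 - p s ^ 2) := by continuity
  have hAne : ∀ s, (1 : ℝ) / 4 - p s ^ 2 ≠ 0 := by
    intro s hz
    have := hHconst s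
    rw [hHdef] at this
    simp only [hz, zero_mul] at this
    exact absurd this.symm (ne_of_gt hc)
  have hA0 : 0 < 1 / 4 - p 0 ^ 2 := by rw [hp0]; nlinarith
  have hA : ∀ t, 0 < 1 / 4 - p t ^ 2 := by
    intro t
    by_contra hle
    push_neg at hle
    have hlt : 1 / 4 - p t ^ 2 < 0 := lt_of_le_of_ne hle (hAne t)
    rcases le_total t 0 with h' | h'
    · obtain ⟨s, _, hs2⟩ := intermediate_value_Icc h' hAcont.continuousOn
        ⟨le_of_lt hlt, le_of_lt hA0⟩
      exact hAne s hs2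
    · obtain ⟨s, _, hs2⟩ := intermediate_value_Icc' h' hAcont.continuousOn
        ⟨le_of_lt hlt, le_of_lt hA0⟩
      exact hAne s hs2
  have hB : ∀ t, 0 < μ ^ 2 / σ ^ 2 - q t ^ 2 := by
    intro t
    have h1 := hHconst t
    rw [hHdef] at h1
    have h2 := hA t
    nlinarith
  -- |σ q| ≤ μ
  have hqb : ∀ t, σ * q t ≤ μ ∧ -μ ≤ σ * q t := by
    intro t
    have h1 := hB t
    have h2 : (σ * q t) ^ 2 < μ ^ 2 := by
      have : σ ^ 2 * (μ ^ 2 / σ ^ 2 - q t ^ 2) = μ ^ 2 - (σ * q t) ^ 2 := by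
        field_simp
      nlinarith [mul_pos (pow_pos hσ 2) h1]
    constructor <;> nlinarith [sq_nonneg (σ * q t - μ), sq_nonneg (σ * q t + μ)]
  have hpb : ∀ t, p t < 1 / 2 ∧ -(1 / 2) < p t := by
    intro t; have := hA t; constructor <;> nlinarith
  -- the monotone function G
  set G : ℝ → ℝ := fun t => μ * t - Real.log (1 / 2 - p t) with hGdef
  have hG : ∀ t, HasDerivAt G
      (μ - (-((-(σ / 4) * q t + σ * q t * (p t) ^ 2))) / (1 / 2 - p t)) t := by
    intro t
    have hne : (1 : ℝ) / 2 - p t ≠ 0 := ne_of_gt (by have := (hpb t).1; linarith)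
    have h := ((hasDerivAt_id t).const_mul μ).sub
      ((((hasDerivAt_const t ((1:ℝ)/2)).sub (hp' t)).log hne))
    refine h.congr_deriv ?_
    simp only [Pi.sub_apply]
    ring
  have hGmono : Monotone G := by
    apply monotone_of_deriv_nonneg (fun t => (hG t).differentiableAt)
    intro t
    rw [(hG t).deriv]
    have h1 : (0:ℝ) < 1 / 2 - p t := by have := (hpb t).1; linarith
    have h2 := (hqb t).1
    have h3 := (hqb t).2
    have h4 := (hpb t).2
    have h6 : (0:ℝ) < 1 / 2 + p t := by linarith
    have h7 : (1:ℝ) - (1 / 2 + p t) ≥ 0 := by have := (hpb t).1; linarith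
    have h5 : -(-(σ / 4) * q t + σ * q t * (p t) ^ 2) / (1 / 2 - p t) ≤ μ := by
      rw [div_le_iff₀ h1]
      nlinarith [mul_nonneg (show (0:ℝ) ≤ μ - σ * q t by linarith) (le_of_lt h6),
        mul_nonneg (le_of_lt hμ) h7, mul_pos h1 h6]
    linarith
  -- there is a time where p ≤ 0
  obtain ⟨hτpos, hper, _⟩ := hτ
  have ht1 : ∃ t₁, p t₁ ≤ 0 := by
    by_contra hall
    push_neg at hall
    have hqmono : StrictMono q := by
      apply strictMono_of_deriv_pos
      intro t
      rw [(hq' t).deriv]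
      have h1 := hB t
      have h2 := hall t
      have : μ ^ 2 / σ * p t - σ * p t * q t ^ 2 = σ * p t * (μ ^ 2 / σ ^ 2 - q t ^ 2) := by
        field_simp
      rw [this]
      positivity
    have := hqmono (show (0:ℝ) < 0 + τ by linarith)
    rw [(hper 0).2] at this
    exact lt_irrefl _ this
  obtain ⟨t₁, ht₁⟩ := ht1
  have hperp : Function.Periodic p τ := fun t => (hper t).1
  obtain ⟨t₀, ht₀mem, ht₀eq⟩ := hperp.exists_mem_Ico₀ hτpos t₁
  have hpt₀ : p t₀ ≤ 0 := ht₀eq ▸ ht₁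
  -- conclude
  have hmono := hGmono ht₀mem.1
  rw [hGdef] at hmono
  simp only [mul_zero, zero_sub, hp0] at hmono
  have hlog : Real.log (1 / 2) ≤ Real.log (1 / 2 - p t₀) :=
    Real.log_le_log (by norm_num) (by linarith)
  have hlog2 : Real.log (1 / 2) = -Real.log 2 := by
    rw [show (1:ℝ)/2 = 2⁻¹ by norm_num, Real.log_inv]
  rw [div_le_iff₀ hμ]
  have ht₀τ : t₀ ≤ τ := le_of_lt (lt_of_lt_of_le ht₀mem.2 le_rfl)
  nlinarith [hmono, hlog, mul_le_mul_of_nonneg_left ht₀τ (le_of_lt hμ)]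

/-- The period function T(ζ) of the periodic solutions of (nps) with initial
condition p(0) = ζ, q(0) = 0, 0 < ζ < 1/2, satisfies lim_{ζ → 1/2⁻} T(ζ) = +∞. -/
theorem period_function_limit_at_half (μ σ : ℝ) (hμ : 0 < μ) (hσ : 0 < σ)
    (Tp : ℝ → ℝ)
    (hTp : ∀ ζ ∈ Set.Ioo (0 : ℝ) (1 / 2), ∃ p q : ℝ → ℝ,
      IsNpsSolution μ σ p q ∧ p 0 = ζ ∧ q 0 = 0 ∧ IsMinimalPeriod p q (Tp ζ)) :
    Tendsto Tp (𝓝[<] ((1 : ℝ) / 2)) atTop := by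
  have hbound : ∀ ζ ∈ Set.Ioo (0 : ℝ) (1 / 2),
      (-Real.log (1 / 2 - ζ) - Real.log 2) / μ ≤ Tp ζ := by
    intro ζ hζ
    obtain ⟨p, q, hs, hp0, hq0, hτ⟩ := hTp ζ hζ
    exact nps_period_lower_bound μ σ hμ hσ ζ hζ p q hs hp0 hq0 _ hτ
  have h1 : Tendsto (fun ζ : ℝ => 1 / 2 - ζ) (𝓝[<] ((1:ℝ)/2)) (𝓝[>] (0:ℝ)) := by
    apply tendsto_nhdsWithin_of_tendsto_nhds_of_eventually_within
    · have h : Tendsto (fun ζ : ℝ => 1 / 2 - ζ) (𝓝 ((1:ℝ)/2)) (𝓝 ((1:ℝ)/2 - 1/2)) :=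
        tendsto_const_nhds.sub tendsto_id
      have h' := h.mono_left (nhdsWithin_le_nhds (s := Set.Iio ((1:ℝ)/2)))
      simpa using h'
    · filter_upwards [self_mem_nhdsWithin] with ζ hζ
      simp only [Set.mem_Iio] at hζ
      simp only [Set.mem_Ioi]
      linarith
  have h2 : Tendsto (fun ζ : ℝ => Real.log (1 / 2 - ζ)) (𝓝[<] ((1:ℝ)/2)) atBot :=
    Real.tendsto_log_nhdsGT_zero.comp h1
  have h3 : Tendsto (fun ζ : ℝ => (-Real.log (1 / 2 - ζ) - Real.log 2) / μ)
      (𝓝[<] ((1:ℝ)/2)) atTop := by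
    apply Tendsto.atTop_div_const hμ
    have h4 : Tendsto (fun ζ : ℝ => -Real.log (1 / 2 - ζ)) (𝓝[<] ((1:ℝ)/2)) atTop :=
      tendsto_neg_atBot_atTop.comp h2
    simpa [sub_eq_add_neg] using tendsto_atTop_add_const_right _ (-Real.log 2) h4
  apply tendsto_atTop_mono' _ _ h3
  have hev : ∀ᶠ ζ in 𝓝[<] ((1:ℝ)/2), ζ ∈ Set.Ioo (0:ℝ) (1/2) := by
    filter_upwards [self_mem_nhdsWithin,
      (eventually_gt_nhds (by norm_num : (0:ℝ) < 1/2)).filter_mono nhdsWithin_le_nhds]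
      with ζ hζ1 hζ2
    exact ⟨hζ2, hζ1⟩
  filter_upwards [hev] with ζ hζ using hbound ζ hζ
end

section
/- For every 0 < ζ < 1/2, the solution of (nps) with initial condition p(0) = ζ, q(0) = 0 is periodic with minimal period T(ζ) = (8/μ) K(2ζ), where K is the complete elliptic integral of the first kind. -/
open Real intervalIntegral Filter Function

namespace NPSaux

noncomputable def itg (k θ : ℝ) : ℝ := 1 / Real.sqrt (1 - k ^ 2 * Real.sin θ ^ 2)

noncomputable def EF (k φ : ℝ) : ℝ := ∫ θ in (0:ℝ)..φ, itg k θ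

variable {k : ℝ}

lemma den_pos (hk0 : 0 < k) (hk1 : k < 1) (θ : ℝ) : 0 < 1 - k ^ 2 * Real.sin θ ^ 2 := by
  nlinarith [Real.sin_sq_le_one θ, sq_nonneg (Real.sin θ)]

lemma itg_pos (hk0 : 0 < k) (hk1 : k < 1) (θ : ℝ) : 0 < itg k θ := by
  exact div_pos one_pos (Real.sqrt_pos.2 (den_pos hk0 hk1 θ))

lemma itg_cont (hk0 : 0 < k) (hk1 : k < 1) : Continuous (itg k) := by
  apply continuous_const.div
  · exact ((continuous_const.sub (continuous_const.mul (Real.continuous_sin.pow 2)))).sqrt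
  · exact fun θ => (Real.sqrt_pos.2 (den_pos hk0 hk1 θ)).ne'

lemma one_le_itg (hk0 : 0 < k) (hk1 : k < 1) (θ : ℝ) : 1 ≤ itg k θ := by
  unfold itg
  rw [le_div_iff₀ (Real.sqrt_pos.2 (den_pos hk0 hk1 θ)), one_mul]
  exact Real.sqrt_le_one.mpr (by nlinarith [sq_nonneg (Real.sin θ), sq_nonneg k])

lemma hasDerivAt_EF (hk0 : 0 < k) (hk1 : k < 1) (φ : ℝ) :
    HasDerivAt (EF k) (itg k φ) φ :=
  intervalIntegral.integral_hasDerivAt_right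
    ((itg_cont hk0 hk1).intervalIntegrable _ _)
    (itg_cont hk0 hk1).aestronglyMeasurable.stronglyMeasurableAtFilter
    (itg_cont hk0 hk1).continuousAt

lemma strictMono_EF (hk0 : 0 < k) (hk1 : k < 1) : StrictMono (EF k) :=
  strictMono_of_deriv_pos fun φ => by
    rw [(hasDerivAt_EF hk0 hk1 φ).deriv]; exact itg_pos hk0 hk1 φ

lemma EF_zero : EF k 0 = 0 := intervalIntegral.integral_same

lemma le_EF (hk0 : 0 < k) (hk1 : k < 1) {φ : ℝ} (hφ : 0 ≤ φ) : φ ≤ EF k φ := by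
  have h := intervalIntegral.integral_mono_on hφ (_root_.intervalIntegrable_const (c := (1:ℝ)) (μ := MeasureTheory.volume))
    ((itg_cont hk0 hk1).intervalIntegrable _ _) (fun x _ => one_le_itg hk0 hk1 x)
  simpa [EF] using h

lemma EF_neg (hk0 : 0 < k) (hk1 : k < 1) (φ : ℝ) : EF k (-φ) = - EF k φ := by
  have heven : ∀ θ, itg k (-θ) = itg k θ := by
    intro θ; unfold itg; rw [Real.sin_neg]; ring_nf
  have h1 : EF k φ = ∫ θ in (0:ℝ)..φ, itg k (-θ) := by
    unfold EF; congr 1; ext θ; rw [heven]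
  rw [intervalIntegral.integral_comp_neg (fun θ => itg k θ)] at h1
  simp only [neg_zero] at h1
  have h2 : (∫ θ in (-φ)..(0:ℝ), itg k θ) = -∫ θ in (0:ℝ)..(-φ), itg k θ :=
    intervalIntegral.integral_symm 0 (-φ)
  rw [h2] at h1
  unfold EF at h1 ⊢
  linarith

lemma periodic_itg : Periodic (itg k) π := by
  intro θ; unfold itg; rw [Real.sin_add_pi]; ring_nf

lemma EF_add_pi (hk0 : 0 < k) (hk1 : k < 1) (a : ℝ) :
    EF k (a + π) = EF k a + EF k π := by
  have h1 : EF k a + ∫ θ in a..(a+π), itg k θ = EF k (a + π) :=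
    intervalIntegral.integral_add_adjacent_intervals
      ((itg_cont hk0 hk1).intervalIntegrable _ _) ((itg_cont hk0 hk1).intervalIntegrable _ _)
  have h2 : (∫ θ in a..(a+π), itg k θ) = ∫ θ in (0:ℝ)..(0+π), itg k θ :=
    periodic_itg.intervalIntegral_add_eq a 0
  rw [h2] at h1
  simp only [zero_add] at h1
  rw [← h1]; rfl

lemma EF_pi (hk0 : 0 < k) (hk1 : k < 1) : EF k π = 2 * EF k (π/2) := by
  have h1 : EF k (π/2) + ∫ θ in (π/2)..π, itg k θ = EF k π :=
    intervalIntegral.integral_add_adjacent_intervals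
      ((itg_cont hk0 hk1).intervalIntegrable _ _) ((itg_cont hk0 hk1).intervalIntegrable _ _)
  have h2 : (∫ θ in (0:ℝ)..(π/2), itg k (π - θ)) = ∫ θ in (π/2)..π, itg k θ := by
    rw [intervalIntegral.integral_comp_sub_left (itg k) π, show π - π/2 = π/2 by ring,
      show π - 0 = π by ring]
  have h3 : (∫ θ in (0:ℝ)..(π/2), itg k (π - θ)) = EF k (π/2) := by
    unfold EF; congr 1; ext θ; unfold itg; rw [Real.sin_pi_sub]
  rw [h3] at h2
  rw [← h2] at h1
  linarith

lemma EF_nat_pi (hk0 : 0 < k) (hk1 : k < 1) (n : ℕ) :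
    EF k (n * π) = n * EF k π := by
  induction n with
  | zero => simpa using EF_zero
  | succ m ih =>
      have : ((m:ℝ)+1) * π = m * π + π := by ring
      push_cast
      rw [this, EF_add_pi hk0 hk1, ih]
      ring

lemma surj_EF (hk0 : 0 < k) (hk1 : k < 1) : Surjective (EF k) := by
  have hdiff : Differentiable ℝ (EF k) := fun φ => (hasDerivAt_EF hk0 hk1 φ).differentiableAt
  have hcont : Continuous (EF k) := hdiff.continuous
  apply hcont.surjective
  · exact tendsto_atTop_mono' atTop
      ((eventually_ge_atTop 0).mono fun φ hφ => le_EF hk0 hk1 hφ) tendsto_id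
  · refine tendsto_atBot_mono' atBot ((eventually_le_atBot 0).mono fun φ hφ => ?_) tendsto_id
    show EF k φ ≤ id φ
    have h1 : EF k φ = - EF k (-φ) := by rw [← EF_neg hk0 hk1, neg_neg]
    have h2 := le_EF hk0 hk1 (neg_nonneg.2 hφ)
    simp only [id_eq]
    linarith


noncomputable def am (hk0 : 0 < k) (hk1 : k < 1) : ℝ → ℝ :=
  (StrictMono.orderIsoOfSurjective (EF k) (strictMono_EF hk0 hk1) (surj_EF hk0 hk1)).symm

lemma am_EF (hk0 : 0 < k) (hk1 : k < 1) (φ : ℝ) : am hk0 hk1 (EF k φ) = φ :=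
  StrictMono.orderIsoOfSurjective_symm_apply_self _ _ _ φ

lemma EF_am (hk0 : 0 < k) (hk1 : k < 1) (u : ℝ) : EF k (am hk0 hk1 u) = u :=
  StrictMono.orderIsoOfSurjective_self_symm_apply _ _ _ u

lemma continuous_am (hk0 : 0 < k) (hk1 : k < 1) : Continuous (am hk0 hk1) :=
  OrderIso.continuous _

lemma strictMono_am (hk0 : 0 < k) (hk1 : k < 1) : StrictMono (am hk0 hk1) :=
  fun a b h => by
    have := (StrictMono.orderIsoOfSurjective (EF k) (strictMono_EF hk0 hk1)
      (surj_EF hk0 hk1)).symm.strictMono h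
    exact this

lemma am_zero (hk0 : 0 < k) (hk1 : k < 1) : am hk0 hk1 0 = 0 := by
  have := am_EF hk0 hk1 0
  rwa [EF_zero] at this

lemma hasDerivAt_am (hk0 : 0 < k) (hk1 : k < 1) (u : ℝ) :
    HasDerivAt (am hk0 hk1) (Real.sqrt (1 - k ^ 2 * Real.sin (am hk0 hk1 u) ^ 2)) u := by
  have h := (hasDerivAt_EF hk0 hk1 (am hk0 hk1 u)).of_local_left_inverse
    (continuous_am hk0 hk1).continuousAt (ne_of_gt (itg_pos hk0 hk1 _))
    (Filter.Eventually.of_forall (EF_am hk0 hk1))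
  have : (itg k (am hk0 hk1 u))⁻¹ = Real.sqrt (1 - k ^ 2 * Real.sin (am hk0 hk1 u) ^ 2) := by
    unfold itg
    rw [one_div, inv_inv]
  rwa [this] at h

lemma am_add_period (hk0 : 0 < k) (hk1 : k < 1) (u : ℝ) :
    am hk0 hk1 (u + 2 * EF k (π/2)) = am hk0 hk1 u + π := by
  have h1 : EF k (am hk0 hk1 u + π) = u + 2 * EF k (π/2) := by
    rw [EF_add_pi hk0 hk1, EF_am, EF_pi hk0 hk1]
  have := am_EF hk0 hk1 (am hk0 hk1 u + π)
  rw [h1] at this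
  exact this


noncomputable def dnn (hk0 : 0 < k) (hk1 : k < 1) (u : ℝ) : ℝ :=
  Real.sqrt (1 - k ^ 2 * Real.sin (am hk0 hk1 u) ^ 2)

noncomputable def pf (hk0 : 0 < k) (hk1 : k < 1) (u : ℝ) : ℝ :=
  k / 2 * Real.cos (am hk0 hk1 u) / dnn hk0 hk1 u

lemma dnn_pos (hk0 : 0 < k) (hk1 : k < 1) (u : ℝ) : 0 < dnn hk0 hk1 u :=
  Real.sqrt_pos.2 (den_pos hk0 hk1 _)

lemma dnn_sq (hk0 : 0 < k) (hk1 : k < 1) (u : ℝ) :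
    dnn hk0 hk1 u ^ 2 = 1 - k ^ 2 * Real.sin (am hk0 hk1 u) ^ 2 :=
  Real.sq_sqrt (den_pos hk0 hk1 _).le

lemma hasDerivAt_sn (hk0 : 0 < k) (hk1 : k < 1) (u : ℝ) :
    HasDerivAt (fun u => Real.sin (am hk0 hk1 u))
      (Real.cos (am hk0 hk1 u) * dnn hk0 hk1 u) u :=
  (Real.hasDerivAt_sin _).comp u (hasDerivAt_am hk0 hk1 u)

lemma hasDerivAt_cn (hk0 : 0 < k) (hk1 : k < 1) (u : ℝ) :
    HasDerivAt (fun u => Real.cos (am hk0 hk1 u))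
      (-Real.sin (am hk0 hk1 u) * dnn hk0 hk1 u) u :=
  (Real.hasDerivAt_cos _).comp u (hasDerivAt_am hk0 hk1 u)

lemma hasDerivAt_dnn (hk0 : 0 < k) (hk1 : k < 1) (u : ℝ) :
    HasDerivAt (dnn hk0 hk1)
      (-(k ^ 2) * Real.sin (am hk0 hk1 u) * Real.cos (am hk0 hk1 u)) u := by
  have hg : HasDerivAt (fun u => 1 - k ^ 2 * Real.sin (am hk0 hk1 u) ^ 2)
      (-(k ^ 2 * (2 * Real.sin (am hk0 hk1 u) ^ 1 *
        (Real.cos (am hk0 hk1 u) * dnn hk0 hk1 u)))) u := by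
    have := (((hasDerivAt_sn hk0 hk1 u).pow 2).const_mul (k ^ 2)).const_sub 1
    exact this.congr_deriv (by norm_num)
  have hsq := (Real.hasDerivAt_sqrt (den_pos hk0 hk1 (am hk0 hk1 u)).ne').comp u hg
  have hd := (dnn_pos hk0 hk1 u).ne'
  refine hsq.congr_deriv ?_
  have hdd : Real.sqrt (1 - k ^ 2 * Real.sin (am hk0 hk1 u) ^ 2) = dnn hk0 hk1 u := rfl
  rw [hdd]
  field_simp

lemma hasDerivAt_pf (hk0 : 0 < k) (hk1 : k < 1) (u : ℝ) :
    HasDerivAt (pf hk0 hk1)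
      (k / 2 * (k ^ 2 - 1) * Real.sin (am hk0 hk1 u) / dnn hk0 hk1 u ^ 2) u := by
  have h := ((hasDerivAt_cn hk0 hk1 u).const_mul (k / 2)).div
    (hasDerivAt_dnn hk0 hk1 u) (dnn_pos hk0 hk1 u).ne'
  have hd2 := dnn_sq hk0 hk1 u
  have hsc := Real.sin_sq_add_cos_sq (am hk0 hk1 u)
  have key : k / 2 * (-Real.sin (am hk0 hk1 u) * dnn hk0 hk1 u) * dnn hk0 hk1 u -
      k / 2 * Real.cos (am hk0 hk1 u) *
        (-(k ^ 2) * Real.sin (am hk0 hk1 u) * Real.cos (am hk0 hk1 u)) =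
      k / 2 * (k ^ 2 - 1) * Real.sin (am hk0 hk1 u) := by
    linear_combination (-(k / 2) * Real.sin (am hk0 hk1 u)) * hd2 +
      ((k ^ 2) * (k / 2) * Real.sin (am hk0 hk1 u)) * hsc
  rw [← key]
  exact h

lemma sn_shift (hk0 : 0 < k) (hk1 : k < 1) (u : ℝ) :
    Real.sin (am hk0 hk1 (u + 2 * EF k (π/2))) = -Real.sin (am hk0 hk1 u) := by
  rw [am_add_period hk0 hk1, Real.sin_add_pi]

lemma cn_shift (hk0 : 0 < k) (hk1 : k < 1) (u : ℝ) :
    Real.cos (am hk0 hk1 (u + 2 * EF k (π/2))) = -Real.cos (am hk0 hk1 u) := by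
  rw [am_add_period hk0 hk1, Real.cos_add_pi]

lemma dnn_shift (hk0 : 0 < k) (hk1 : k < 1) (u : ℝ) :
    dnn hk0 hk1 (u + 2 * EF k (π/2)) = dnn hk0 hk1 u := by
  unfold dnn
  rw [sn_shift hk0 hk1 u]
  ring_nf

lemma pf_shift (hk0 : 0 < k) (hk1 : k < 1) (u : ℝ) :
    pf hk0 hk1 (u + 2 * EF k (π/2)) = -pf hk0 hk1 u := by
  unfold pf
  rw [cn_shift hk0 hk1 u, dnn_shift hk0 hk1 u]
  ring


lemma alg1 (k μ σ s c d : ℝ) (hσ : σ ≠ 0) (hd : d ≠ 0)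
    (hsc : s ^ 2 + c ^ 2 = 1) (hd2 : d ^ 2 = 1 - k ^ 2 * s ^ 2) :
    k / 2 * (k ^ 2 - 1) * s / d ^ 2 * (μ / 2) =
      -(σ / 4) * (k * μ / σ * s) + σ * (k * μ / σ * s) * (k / 2 * c / d) ^ 2 := by
  field_simp
  linear_combination (4 * k * μ * s) * hd2 - (4 * k ^ 3 * μ * s) * hsc

lemma alg2 (k μ σ s c d : ℝ) (hσ : σ ≠ 0) (hd : d ≠ 0)
    (hsc : s ^ 2 + c ^ 2 = 1) (hd2 : d ^ 2 = 1 - k ^ 2 * s ^ 2) :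
    k * μ / σ * (c * d) * (μ / 2) =
      μ ^ 2 / σ * (k / 2 * c / d) - σ * (k / 2 * c / d) * (k * μ / σ * s) ^ 2 := by
  field_simp
  linear_combination (k * μ ^ 2 * c) * hd2

end NPSaux



/-- For every 0 < ζ < 1/2, the solution of (nps) with initial condition
p(0) = ζ, q(0) = 0 is periodic with minimal period T(ζ) = (8/μ) K(2ζ), where
K(x) = ∫₀^{π/2} dθ/√(1 − x² sin²θ) is the complete elliptic integral of the
first kind. -/
theorem period_function_elliptic_formula (μ σ : ℝ) (hμ : 0 < μ) (hσ : 0 < σ)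
    (ζ : ℝ) (hζ : ζ ∈ Set.Ioo (0 : ℝ) (1 / 2))
    (K : ℝ → ℝ)
    (hK : ∀ x : ℝ, K x = ∫ θ in (0 : ℝ)..(Real.pi / 2),
      1 / Real.sqrt (1 - x ^ 2 * Real.sin θ ^ 2)) :
    ∃ p q : ℝ → ℝ,
      IsNpsSolution μ σ p q ∧ p 0 = ζ ∧ q 0 = 0 ∧
      IsMinimalPeriod p q ((8 / μ) * K (2 * ζ)) := by
  obtain ⟨hζ0, hζhalf⟩ := hζ
  have hk0 : (0:ℝ) < 2 * ζ := by linarith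
  have hk1 : 2 * ζ < 1 := by linarith
  set K₀ : ℝ := NPSaux.EF (2 * ζ) (Real.pi / 2) with hK₀def
  have hKk : K (2 * ζ) = K₀ := by
    rw [hK]; rfl
  have hK₀pos : 0 < K₀ := by
    have h1 : Real.pi / 2 ≤ K₀ := NPSaux.le_EF hk0 hk1 (by positivity)
    have := Real.pi_pos
    linarith
  have hv : ∀ t : ℝ, HasDerivAt (fun t : ℝ => μ * t / 2) (μ / 2) t := fun t => by
    simpa using ((hasDerivAt_id t).const_mul μ).div_const 2
  have hq0 : ∀ u : ℝ, NPSaux.am hk0 hk1 0 = 0 := fun _ => NPSaux.am_zero hk0 hk1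
  refine ⟨fun t => NPSaux.pf hk0 hk1 (μ * t / 2),
      fun t => 2 * ζ * μ / σ * Real.sin (NPSaux.am hk0 hk1 (μ * t / 2)), ?_, ?_, ?_, ?_⟩
  · -- solution of the system
    intro t
    have hd := NPSaux.dnn_pos hk0 hk1 (μ * t / 2)
    have hd2 := NPSaux.dnn_sq hk0 hk1 (μ * t / 2)
    have hsc := Real.sin_sq_add_cos_sq (NPSaux.am hk0 hk1 (μ * t / 2))
    constructor
    · have hp := (NPSaux.hasDerivAt_pf hk0 hk1 (μ * t / 2)).comp t (hv t)
      have halg := NPSaux.alg1 (2 * ζ) μ σ (Real.sin (NPSaux.am hk0 hk1 (μ * t / 2)))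
        (Real.cos (NPSaux.am hk0 hk1 (μ * t / 2))) (NPSaux.dnn hk0 hk1 (μ * t / 2))
        hσ.ne' hd.ne' hsc hd2
      simp only [NPSaux.pf]
      rw [← halg]
      exact hp
    · have hq := ((NPSaux.hasDerivAt_sn hk0 hk1 (μ * t / 2)).const_mul
        (2 * ζ * μ / σ)).comp t (hv t)
      have halg := NPSaux.alg2 (2 * ζ) μ σ (Real.sin (NPSaux.am hk0 hk1 (μ * t / 2)))
        (Real.cos (NPSaux.am hk0 hk1 (μ * t / 2))) (NPSaux.dnn hk0 hk1 (μ * t / 2))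
        hσ.ne' hd.ne' hsc hd2
      simp only [NPSaux.pf]
      rw [← halg]
      exact hq
  · -- p 0 = ζ
    show NPSaux.pf hk0 hk1 (μ * 0 / 2) = ζ
    rw [show μ * 0 / 2 = 0 by ring]
    simp [NPSaux.pf, NPSaux.dnn, NPSaux.am_zero hk0 hk1]
  · -- q 0 = 0
    show 2 * ζ * μ / σ * Real.sin (NPSaux.am hk0 hk1 (μ * 0 / 2)) = 0
    rw [show μ * 0 / 2 = 0 by ring, NPSaux.am_zero hk0 hk1]
    simp
  · -- minimal period
    rw [hKk]
    have hhalf : ∀ t : ℝ,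
        NPSaux.pf hk0 hk1 (μ * (t + 4 * K₀ / μ) / 2) = -NPSaux.pf hk0 hk1 (μ * t / 2) ∧
        Real.sin (NPSaux.am hk0 hk1 (μ * (t + 4 * K₀ / μ) / 2)) =
          -Real.sin (NPSaux.am hk0 hk1 (μ * t / 2)) := by
      intro t
      have harg : μ * (t + 4 * K₀ / μ) / 2 = μ * t / 2 + 2 * K₀ := by
        field_simp; ring
      rw [harg]
      exact ⟨NPSaux.pf_shift hk0 hk1 _, NPSaux.sn_shift hk0 hk1 _⟩
    refine ⟨by positivity, ?_, ?_⟩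
    · intro t
      have hT : t + 8 / μ * K₀ = (t + 4 * K₀ / μ) + 4 * K₀ / μ := by
        field_simp; ring
      constructor
      · show NPSaux.pf hk0 hk1 (μ * (t + 8 / μ * K₀) / 2) = _
        rw [hT, (hhalf _).1, (hhalf t).1, neg_neg]
      · show 2 * ζ * μ / σ * Real.sin (NPSaux.am hk0 hk1 (μ * (t + 8 / μ * K₀) / 2)) = _
        rw [hT, (hhalf _).2, (hhalf t).2, neg_neg]
    · -- minimality
      intro τ' hτ' hper
      have h0τ : (0:ℝ) + τ' = τ' := by ring
      have hq00 : Real.sin (NPSaux.am hk0 hk1 (μ * 0 / 2)) = 0 := by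
        rw [show μ * 0 / 2 = 0 by ring, NPSaux.am_zero hk0 hk1]; simp
      have hqτ : Real.sin (NPSaux.am hk0 hk1 (μ * τ' / 2)) = 0 := by
        have h := (hper 0).2
        simp only [zero_add] at h
        rw [hq00] at h
        have hne : 2 * ζ * μ / σ ≠ 0 := by positivity
        have := mul_eq_zero.1 (by linarith [h] : 2 * ζ * μ / σ *
          Real.sin (NPSaux.am hk0 hk1 (μ * τ' / 2)) = 0)
        rcases this with h' | h'
        · exact absurd h' hne
        · exact h'
      have hdnn1 : NPSaux.dnn hk0 hk1 (μ * τ' / 2) = 1 := by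
        unfold NPSaux.dnn
        rw [hqτ]
        simp
      have hampos : 0 < NPSaux.am hk0 hk1 (μ * τ' / 2) := by
        have := NPSaux.strictMono_am hk0 hk1 (show (0:ℝ) < μ * τ' / 2 by positivity)
        rwa [NPSaux.am_zero hk0 hk1] at this
      have hp00 : NPSaux.pf hk0 hk1 (μ * 0 / 2) = ζ := by
        rw [show μ * 0 / 2 = 0 by ring]
        simp [NPSaux.pf, NPSaux.dnn, NPSaux.am_zero hk0 hk1]
      have hpτ : NPSaux.pf hk0 hk1 (μ * τ' / 2) = ζ := by
        have h := (hper 0).1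
        simp only [zero_add] at h
        rw [hp00] at h
        exact h
      have hcos : Real.cos (NPSaux.am hk0 hk1 (μ * τ' / 2)) = 1 := by
        have h := hpτ
        simp only [NPSaux.pf] at h
        rw [hdnn1] at h
        have h2 : ζ * Real.cos (NPSaux.am hk0 hk1 (μ * τ' / 2)) = ζ * 1 := by
          rw [mul_one]; linarith [h]
        exact mul_left_cancel₀ hζ0.ne' h2
      obtain ⟨m, hm⟩ := (Real.cos_eq_one_iff _).1 hcos
      have hmpos : 0 < m := by
        have hπ := Real.pi_pos
        have hmR : 0 < (m:ℝ) := by nlinarith [hampos, hm]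
        exact_mod_cast hmR
      obtain ⟨m', rfl⟩ := Int.eq_ofNat_of_zero_le hmpos.le
      have hm'1 : 1 ≤ m' := by exact_mod_cast hmpos
      have hEa : NPSaux.EF (2*ζ) (NPSaux.am hk0 hk1 (μ * τ' / 2)) = μ * τ' / 2 :=
        NPSaux.EF_am hk0 hk1 _
      have harg : NPSaux.am hk0 hk1 (μ * τ' / 2) = ((2 * m' : ℕ) : ℝ) * Real.pi := by
        rw [← hm]; push_cast; ring
      rw [harg, NPSaux.EF_nat_pi hk0 hk1, NPSaux.EF_pi hk0 hk1] at hEa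
      -- hEa : (2m') * (2 * K₀) = μ τ' / 2
      have hτval : τ' = 8 * (m' : ℝ) * K₀ / μ := by
        have hμ' : μ ≠ 0 := hμ.ne'
        field_simp at hEa ⊢
        push_cast at hEa
        linarith
      rw [hτval]
      rw [div_mul_eq_mul_div, div_le_div_iff₀ hμ hμ]
      have hm'R : (1:ℝ) ≤ (m' : ℝ) := by exact_mod_cast hm'1
      nlinarith [mul_nonneg (mul_nonneg (sub_nonneg.2 hm'R) hK₀pos.le) hμ.le]
end
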